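/- arXiv:0808.1568 — 7 statements merged into one kernel-verified Lean document; each statement's English description precedes it below -/
import Mathlib

section
/- For every λ in (1/2, 1), the largest nearest-neighbor gap of A'_N(λ) equals exactly λ^{N-1}. -/
/-- The set `A'_N(λ) = { Σ_{n=0}^{N-1} a_n λ^n : a_n ∈ {0,1} }`. -/
def Aprime (lam : ℝ) (N : ℕ) : Set ℝ :=
  {x | ∃ a : Fin N → Bool, x = ∑ n : Fin N, if a n then lam ^ (n : ℕ) else 0}

lemma aprime_nonneg {lam : ℝ} (h0 : 0 ≤ lam) {N : ℕ} {x : ℝ} (hx : x ∈ Aprime lam N) :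
    0 ≤ x := by
  obtain ⟨a, rfl⟩ := hx
  apply Finset.sum_nonneg
  intro i _
  split
  · positivity
  · exact le_rfl

lemma aprime_le {lam : ℝ} (h0 : 0 ≤ lam) {N : ℕ} {x : ℝ} (hx : x ∈ Aprime lam N) :
    x ≤ ∑ i ∈ Finset.range N, lam ^ i := by
  obtain ⟨a, rfl⟩ := hx
  rw [← Fin.sum_univ_eq_sum_range]
  apply Finset.sum_le_sum
  intro i _
  split
  · exact le_rfl
  · positivity

lemma aprime_cons {lam : ℝ} {N : ℕ} {z : ℝ} (hz : z ∈ Aprime lam N) (b : Bool) :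
    (if b then (1:ℝ) else 0) + lam * z ∈ Aprime lam (N + 1) := by
  obtain ⟨a, rfl⟩ := hz
  refine ⟨Fin.cons b a, ?_⟩
  rw [Fin.sum_univ_succ]
  simp [Finset.mul_sum, mul_ite, pow_succ, mul_comm]

lemma aprime_full (lam : ℝ) (N : ℕ) :
    (∑ i ∈ Finset.range N, lam ^ i) ∈ Aprime lam N := by
  refine ⟨fun _ => true, ?_⟩
  rw [← Fin.sum_univ_eq_sum_range]
  simp

lemma aprime_zero (lam : ℝ) (N : ℕ) : (0:ℝ) ∈ Aprime lam N :=
  ⟨fun _ => false, by simp⟩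

lemma key {lam : ℝ} (hl : lam ∈ Set.Ioo (1/2 : ℝ) 1) :
    ∀ N : ℕ, ∀ t : ℝ, 0 ≤ t → t ≤ ∑ i ∈ Finset.range N, lam ^ i →
      ∃ z ∈ Aprime lam N, z ≤ t ∧ t ≤ z + lam ^ (N - 1) := by
  obtain ⟨hhalf, h1⟩ := hl
  have hlpos : (0:ℝ) < lam := by linarith
  intro N
  induction N with
  | zero =>
    intro t ht0 ht1
    simp only [Finset.range_zero, Finset.sum_empty] at ht1
    exact ⟨0, aprime_zero lam 0, by linarith, by simpa using by linarith⟩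
  | succ N ih =>
    intro t ht0 ht1
    rw [geom_sum_succ] at ht1
    have hmul : lam * lam ^ (N - 1) ≤ lam ^ N := by
      cases N with
      | zero => simpa using h1.le
      | succ n => simp [pow_succ, mul_comm]
    by_cases hc : t ≤ lam * ∑ i ∈ Finset.range N, lam ^ i
    · obtain ⟨z, hz, hz1, hz2⟩ := ih (t / lam) (by positivity)
        (by rw [div_le_iff₀ hlpos]; linarith)
      have hd : t / lam * lam = t := div_mul_cancel₀ t hlpos.ne'
      refine ⟨lam * z, by simpa using aprime_cons hz false, ?_, ?_⟩
      · nlinarith [mul_le_mul_of_nonneg_right hz1 hlpos.le]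
      · simp only [Nat.add_sub_cancel]
        nlinarith [mul_le_mul_of_nonneg_right hz2 hlpos.le]
    · push_neg at hc
      by_cases hd : 1 ≤ t
      · obtain ⟨z, hz, hz1, hz2⟩ := ih ((t - 1) / lam)
          (div_nonneg (by linarith) hlpos.le)
          (by rw [div_le_iff₀ hlpos]; linarith)
        have hdc : (t - 1) / lam * lam = t - 1 := div_mul_cancel₀ _ hlpos.ne'
        refine ⟨1 + lam * z, by simpa using aprime_cons hz true, ?_, ?_⟩
        · nlinarith [mul_le_mul_of_nonneg_right hz1 hlpos.le]
        · simp only [Nat.add_sub_cancel]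
          nlinarith [mul_le_mul_of_nonneg_right hz2 hlpos.le]
      · push_neg at hd
        refine ⟨lam * ∑ i ∈ Finset.range N, lam ^ i,
          by simpa using aprime_cons (aprime_full lam N) false, hc.le, ?_⟩
        have hSmul := geom_sum_mul lam N
        have hS0 : (0:ℝ) ≤ ∑ i ∈ Finset.range N, lam ^ i :=
          Finset.sum_nonneg fun i _ => by positivity
        have : (N + 1 - 1 : ℕ) = N := by omega
        rw [this]
        nlinarith [hSmul, hS0, mul_nonneg hS0 (by linarith : (0:ℝ) ≤ 2 * lam - 1)]

lemma aprime_top {lam : ℝ} {N : ℕ} (hN : 1 ≤ N) : lam ^ (N - 1) ∈ Aprime lam N := by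
  refine ⟨fun n => decide ((n : ℕ) = N - 1), ?_⟩
  have : ∀ n : Fin N, (if decide ((n : ℕ) = N - 1) = true then lam ^ (n : ℕ) else 0)
      = (if (n : ℕ) = N - 1 then lam ^ (n : ℕ) else 0) := by
    intro n; simp
  rw [Finset.sum_congr rfl fun n _ => this n,
    Fin.sum_univ_eq_sum_range (fun n => if n = N - 1 then lam ^ n else 0),
    Finset.sum_ite_eq' (Finset.range N) (N - 1) (fun n => lam ^ n),
    if_pos (Finset.mem_range.2 (by omega))]

lemma aprime_lb {lam : ℝ} (hl : lam ∈ Set.Ioo (1/2 : ℝ) 1) {N : ℕ} (hN : 1 ≤ N)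
    {z : ℝ} (hz : z ∈ Aprime lam N) (hz0 : z ≠ 0) : lam ^ (N - 1) ≤ z := by
  obtain ⟨hhalf, h1⟩ := hl
  have hlpos : (0:ℝ) < lam := by linarith
  obtain ⟨a, rfl⟩ := hz
  have hex : ∃ i : Fin N, a i = true := by
    by_contra h
    push_neg at h
    simp only [Bool.not_eq_true] at h
    exact hz0 (by simp [h])
  obtain ⟨i, hi⟩ := hex
  have h2 : lam ^ (N - 1) ≤ lam ^ (i : ℕ) :=
    pow_le_pow_of_le_one hlpos.le h1.le (by omega)
  have h3 : lam ^ (i : ℕ) ≤ ∑ n : Fin N, if a n then lam ^ (n : ℕ) else 0 := by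
    have := Finset.single_le_sum (f := fun n : Fin N => if a n then lam ^ (n : ℕ) else 0)
      (fun j _ => by split; exacts [by positivity, le_rfl]) (Finset.mem_univ i)
    simpa [hi] using this
  linarith

/-- For every λ ∈ (1/2,1), the largest nearest-neighbor gap of `A'_N(λ)` equals `λ^(N-1)`:
every gap between consecutive elements is at most `λ^(N-1)`, and some pair of consecutive
elements realizes it. -/
theorem stmt_1 (lam : ℝ) (hlam : lam ∈ Set.Ioo (1/2 : ℝ) 1) (N : ℕ) (hN : 1 ≤ N) :
    (∀ x ∈ Aprime lam N, ∀ y ∈ Aprime lam N, x < y →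
      (∀ z ∈ Aprime lam N, ¬(x < z ∧ z < y)) → y - x ≤ lam ^ (N - 1)) ∧
    (∃ x ∈ Aprime lam N, ∃ y ∈ Aprime lam N, x < y ∧
      (∀ z ∈ Aprime lam N, ¬(x < z ∧ z < y)) ∧ y - x = lam ^ (N - 1)) := by
  obtain ⟨hhalf, h1⟩ := hlam
  have hlpos : (0:ℝ) < lam := by linarith
  have hppos : (0:ℝ) < lam ^ (N - 1) := by positivity
  constructor
  · intro x hx y hy hxy hgap
    by_contra hcon
    push_neg at hcon
    set t : ℝ := (x + lam ^ (N - 1) + y) / 2 with ht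
    have hx0 : 0 ≤ x := aprime_nonneg hlpos.le hx
    have hyS : y ≤ ∑ i ∈ Finset.range N, lam ^ i := aprime_le hlpos.le hy
    have ht0 : 0 ≤ t := by rw [ht]; linarith
    have htlt : t < y := by rw [ht]; linarith
    obtain ⟨z, hz, hz1, hz2⟩ := key ⟨hhalf, h1⟩ N t ht0 (by linarith)
    have hzgt : x < z := by rw [ht] at hz2; linarith
    have hzlt : z < y := lt_of_le_of_lt hz1 htlt
    exact hgap z hz ⟨hzgt, hzlt⟩
  · refine ⟨0, aprime_zero lam N, lam ^ (N - 1), aprime_top hN, hppos, ?_, by ring⟩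
    intro z hz ⟨hz1, hz2⟩
    exact absurd (aprime_lb ⟨hhalf, h1⟩ hN hz hz1.ne') (not_le.2 hz2)
end

section
/- The set of zeros in (1/2, 1) of polynomials with constant coefficient 1 and all other coefficients in {−1, 0, 1} is dense in (1/2, 1). -/
noncomputable def grR (l : ℝ) : ℕ → ℝ
  | 0 => 1
  | (k+1) => if l^(k+1) ≤ grR l k then grR l k - l^(k+1) else grR l k

noncomputable def grC (l : ℝ) : ℕ → ℝ
  | 0 => 0
  | (k+1) => if l^(k+1) ≤ grR l k then 1 else 0

lemma grR_succ (l : ℝ) (k : ℕ) :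
    grR l (k+1) = if l^(k+1) ≤ grR l k then grR l k - l^(k+1) else grR l k := by
  rw [grR]

lemma grC_succ (l : ℝ) (k : ℕ) :
    grC l (k+1) = if l^(k+1) ≤ grR l k then 1 else 0 := by
  rw [grC]

lemma grC_mem (l : ℝ) (n : ℕ) : grC l n = 0 ∨ grC l n = 1 := by
  cases n with
  | zero => left; rfl
  | succ k =>
    rw [grC_succ]
    by_cases h : l^(k+1) ≤ grR l k <;> simp [h]

lemma grR_eq (l : ℝ) (k : ℕ) :
    grR l k = 1 - ∑ n ∈ Finset.Icc 1 k, grC l n * l ^ n := by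
  induction k with
  | zero => simp [grR]
  | succ k ih =>
    rw [Finset.sum_Icc_succ_top (by omega), grR_succ, grC_succ]
    by_cases h : l^(k+1) ≤ grR l k
    · rw [if_pos h, if_pos h, ih]; ring
    · rw [if_neg h, if_neg h, ih]; ring

lemma grR_bounds (l : ℝ) (hl : 1/2 ≤ l) (hl0 : 0 ≤ l) (k : ℕ) :
    0 ≤ grR l k ∧ grR l k ≤ l ^ k := by
  induction k with
  | zero => simp [grR]
  | succ k ih =>
    obtain ⟨h0, h1⟩ := ih
    rw [grR_succ]
    by_cases h : l^(k+1) ≤ grR l k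
    · rw [if_pos h]
      have hp : (0:ℝ) ≤ l ^ k := pow_nonneg hl0 k
      have hps : l ^ (k+1) = l ^ k * l := pow_succ l k
      constructor
      · linarith
      · nlinarith
    · rw [if_neg h]
      exact ⟨h0, le_of_lt (lt_of_not_ge h)⟩

lemma grC_one (l : ℝ) (hl : l ≤ 1) : grC l 1 = 1 := by
  rw [grC_succ]
  simp [grR, hl]

/-- The set of zeros in (1/2,1) of polynomials `1 + Σ_{n=1}^k c_n x^n` with
`c_n ∈ {-1,0,1}` is dense in (1/2,1). -/
theorem stmt_3 :
    Set.Ioo (1/2 : ℝ) 1 ⊆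
      closure {x : ℝ | x ∈ Set.Ioo (1/2 : ℝ) 1 ∧
        ∃ k : ℕ, ∃ c : ℕ → ℝ, (∀ n, c n ∈ ({-1, 0, 1} : Set ℝ)) ∧
          1 + ∑ n ∈ Finset.Icc 1 k, c n * x ^ n = 0} := by
  intro l hl
  obtain ⟨hl2, hl1⟩ := hl
  have hl0 : (0:ℝ) ≤ l := by linarith
  rw [Metric.mem_closure_iff]
  intro ε hε
  obtain ⟨k, hk⟩ := exists_pow_lt_of_lt_one (lt_min hε (by linarith : (0:ℝ) < 1 - l)) hl1
  set K := k + 1 with hK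
  have hKk : l ^ K ≤ l ^ k := pow_le_pow_of_le_one hl0 hl1.le (by omega)
  have hKε : l ^ K < ε := lt_of_le_of_lt hKk (lt_of_lt_of_le hk (min_le_left _ _))
  have hK1 : l ^ K < 1 - l := lt_of_le_of_lt hKk (lt_of_lt_of_le hk (min_le_right _ _))
  have hKpos : (0:ℝ) ≤ l ^ K := pow_nonneg hl0 K
  set p : ℝ → ℝ := fun x => 1 - ∑ n ∈ Finset.Icc 1 K, grC l n * x ^ n with hp
  set y := l + l ^ K with hy
  have hly : l ≤ y := by simp [hy]; linarith
  have hpl : p l = grR l K := (grR_eq l K).symm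
  obtain ⟨hb0, hb1⟩ := grR_bounds l (by linarith) hl0 K
  -- p y ≤ p l - (y - l)
  have hmono : ∑ n ∈ Finset.Icc 1 K, grC l n * l ^ n + (y - l) ≤
      ∑ n ∈ Finset.Icc 1 K, grC l n * y ^ n := by
    have h1 : (1 : ℕ) ∈ Finset.Icc 1 K := by simp [hK]
    have hterm : ∀ n ∈ Finset.Icc 1 K, 0 ≤ grC l n * y ^ n - grC l n * l ^ n := by
      intro n _
      have hle : l ^ n ≤ y ^ n := pow_le_pow_left₀ hl0 hly n
      rcases grC_mem l n with h | h <;> simp [h] <;> linarith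
    have := Finset.single_le_sum hterm h1
    have hc1 : grC l 1 = 1 := grC_one l hl1.le
    rw [Finset.sum_sub_distrib] at this
    simp [hc1] at this
    linarith
  have hpy : p y ≤ 0 := by
    have : p y ≤ p l - (y - l) := by simp only [hp]; linarith
    rw [hpl] at this
    have : p y ≤ grR l K - l ^ K := by simp [hy] at this ⊢; linarith
    linarith
  have hpl0 : 0 ≤ p l := by rw [hpl]; exact hb0
  have hcont : ContinuousOn p (Set.Icc l y) := by
    apply Continuous.continuousOn
    fun_prop
  have hIVT := intermediate_value_Icc' hly hcont
  have h0mem : (0:ℝ) ∈ Set.Icc (p y) (p l) := ⟨hpy, hpl0⟩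
  obtain ⟨x, hx, hpx⟩ := hIVT h0mem
  refine ⟨x, ⟨⟨by linarith [hx.1], by linarith [hx.2, hK1]⟩, K,
    fun n => -(grC l n), ?_, ?_⟩, ?_⟩
  · intro n
    rcases grC_mem l n with h | h <;> simp [h]
  · have : ∑ n ∈ Finset.Icc 1 K, -grC l n * x ^ n
        = -∑ n ∈ Finset.Icc 1 K, grC l n * x ^ n := by
      rw [← Finset.sum_neg_distrib]; simp only [neg_mul]
    rw [this]
    have : (1:ℝ) - ∑ n ∈ Finset.Icc 1 K, grC l n * x ^ n = 0 := hpx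
    linarith
  · rw [Real.dist_eq, abs_lt]
    constructor <;> [linarith [hx.2]; linarith [hx.1]]
end

section
/- Let I = [λ_0, λ_1] ⊂ (1/2, 1) be a closed interval such that every power series f(x) = 1 + Σ_{n≥1} c_n x^n with c_n ∈ {−1,0,1} satisfies: f(x) = 0 and x ∈ I imply f'(x) ≠ 0. Then there exists a constant C > 0, depending only on I, such that for every such power series g and every ρ > 0, the Lebesgue measure of { λ ∈ I : |g(λ)| ≤ ρ } is at most C·ρ. -/
open MeasureTheory

namespace Stmt5Aux

lemma sum_u1 {r : ℝ} (h2 : 1/2 < r) (h1 : r < 1) :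
    Summable (fun n : ℕ => (n : ℝ) * r ^ (n - 1)) := by
  have hr0 : (0:ℝ) < r := by linarith
  have hs : Summable (fun n : ℕ => (n : ℝ) ^ 1 * r ^ n) :=
    summable_pow_mul_geometric_of_norm_lt_one 1 (by rw [Real.norm_eq_abs, abs_of_pos hr0]; exact h1)
  refine Summable.of_nonneg_of_le (fun n => by positivity) (fun n => ?_) (hs.mul_left 2)
  have hb : r ^ (n - 1) ≤ 2 * r ^ n := by
    cases n with
    | zero => simpa using by linarith
    | succ m =>
      simp only [Nat.add_sub_cancel, pow_succ]
      nlinarith [pow_pos hr0 m, pow_nonneg hr0.le m]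
  calc (n : ℝ) * r ^ (n - 1) ≤ (n : ℝ) * (2 * r ^ n) := by
        apply mul_le_mul_of_nonneg_left hb (Nat.cast_nonneg n)
    _ = 2 * ((n : ℝ) ^ 1 * r ^ n) := by ring

lemma sum_u2 {r : ℝ} (h2 : 1/2 < r) (h1 : r < 1) :
    Summable (fun n : ℕ => (n : ℝ) * ((n - 1 : ℕ) : ℝ) * r ^ (n - 2)) := by
  have hr0 : (0:ℝ) < r := by linarith
  have hs : Summable (fun n : ℕ => (n : ℝ) ^ 2 * r ^ n) :=
    summable_pow_mul_geometric_of_norm_lt_one 2 (by rw [Real.norm_eq_abs, abs_of_pos hr0]; exact h1)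
  refine Summable.of_nonneg_of_le (fun n => by positivity) (fun n => ?_) (hs.mul_left 4)
  have hb : r ^ (n - 2) ≤ 4 * r ^ n := by
    match n with
    | 0 => simpa using by linarith
    | 1 => norm_num; nlinarith
    | (m+2) =>
      simp only [Nat.add_sub_cancel, pow_succ, pow_add]
      nlinarith [pow_pos hr0 m, mul_pos (by linarith : (0:ℝ) < 2*r-1)
        (by linarith : (0:ℝ) < 2*r+1)]
  have hn1 : ((n - 1 : ℕ) : ℝ) ≤ (n : ℝ) := by exact_mod_cast Nat.sub_le n 1
  calc (n : ℝ) * ((n - 1 : ℕ) : ℝ) * r ^ (n - 2)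
      ≤ (n : ℝ) * (n : ℝ) * (4 * r ^ n) := by
        apply mul_le_mul (mul_le_mul_of_nonneg_left hn1 (Nat.cast_nonneg n)) hb (by positivity)
          (by positivity)
    _ = 4 * ((n : ℝ) ^ 2 * r ^ n) := by ring


/-- termwise bound -/
lemma term_bound {c : ℕ → ℝ} (hc : ∀ n, |c n| ≤ 1) {x r : ℝ} (hx : |x| ≤ r) (n k : ℕ) :
    |c n * x ^ k| ≤ r ^ k := by
  rw [abs_mul, abs_pow]
  calc |c n| * |x| ^ k ≤ 1 * r ^ k :=
        mul_le_mul (hc n) (pow_le_pow_left₀ (abs_nonneg x) hx k) (by positivity) zero_le_one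
    _ = r ^ k := one_mul _

lemma hasDerivAtF {r : ℝ} (h2 : 1/2 < r) (h1 : r < 1) {c : ℕ → ℝ} (hc : ∀ n, |c n| ≤ 1)
    {x : ℝ} (hx : x ∈ Set.Ioo (-r) r) :
    HasDerivAt (fun y : ℝ => ∑' n : ℕ, c n * y ^ n)
      (∑' n : ℕ, c n * ((n : ℝ) * x ^ (n - 1))) x := by
  have hr0 : (0:ℝ) < r := by linarith
  refine hasDerivAt_tsum_of_isPreconnected (sum_u1 h2 h1) isOpen_Ioo
    (convex_Ioo _ _).isPreconnected
    (fun n y _ => (hasDerivAt_pow n y).const_mul (c n)) (fun n y hy => ?_)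
    (Set.mem_Ioo.2 ⟨by linarith, hr0⟩) ?_ hx
  · have hyr : |y| ≤ r := by
      rw [abs_le]; exact ⟨(Set.mem_Ioo.1 hy).1.le, (Set.mem_Ioo.1 hy).2.le⟩
    have : |c n * ((n:ℝ) * y ^ (n-1))| ≤ (n:ℝ) * r ^ (n-1) := by
      rw [show c n * ((n:ℝ) * y ^ (n-1)) = (n:ℝ) * (c n * y ^ (n-1)) by ring, abs_mul,
        abs_of_nonneg (Nat.cast_nonneg n : (0:ℝ) ≤ n)]
      exact mul_le_mul_of_nonneg_left (term_bound hc hyr n (n-1)) (Nat.cast_nonneg n)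
    rw [Real.norm_eq_abs]; exact this
  · apply summable_of_ne_finset_zero (s := {0})
    intro n hn
    simp [zero_pow (by simpa using hn : n ≠ 0)]

lemma hasDerivAtD {r : ℝ} (h2 : 1/2 < r) (h1 : r < 1) {c : ℕ → ℝ} (hc : ∀ n, |c n| ≤ 1)
    {x : ℝ} (hx : x ∈ Set.Ioo (-r) r) :
    HasDerivAt (fun y : ℝ => ∑' n : ℕ, c n * ((n : ℝ) * y ^ (n - 1)))
      (∑' n : ℕ, c n * ((n : ℝ) * (((n - 1 : ℕ) : ℝ) * x ^ (n - 1 - 1)))) x := by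
  have hr0 : (0:ℝ) < r := by linarith
  refine hasDerivAt_tsum_of_isPreconnected (sum_u2 h2 h1) isOpen_Ioo
    (convex_Ioo _ _).isPreconnected
    (fun n y _ => ((hasDerivAt_pow (n-1) y).const_mul ((n:ℝ))).const_mul (c n)) (fun n y hy => ?_)
    (Set.mem_Ioo.2 ⟨by linarith, hr0⟩) ?_ hx
  · have hyr : |y| ≤ r := by
      rw [abs_le]; exact ⟨(Set.mem_Ioo.1 hy).1.le, (Set.mem_Ioo.1 hy).2.le⟩
    have : |c n * ((n:ℝ) * (((n-1:ℕ):ℝ) * y ^ (n-1-1)))| ≤ (n:ℝ) * ((n-1:ℕ):ℝ) * r ^ (n-1-1) := by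
      rw [show c n * ((n:ℝ) * (((n-1:ℕ):ℝ) * y ^ (n-1-1)))
          = ((n:ℝ) * ((n-1:ℕ):ℝ)) * (c n * y ^ (n-1-1)) by ring, abs_mul,
        abs_of_nonneg (by positivity : (0:ℝ) ≤ (n:ℝ) * ((n-1:ℕ):ℝ))]
      exact mul_le_mul_of_nonneg_left (term_bound hc hyr n (n-1-1)) (by positivity)
    have h12 : n - 1 - 1 = n - 2 := by omega
    rw [h12] at this
    rw [Real.norm_eq_abs]; rw [h12]; exact this
  · apply summable_of_ne_finset_zero (s := {0, 1})
    intro n hn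
    have hn2 : n - 1 ≠ 0 := by simp at hn; omega
    simp [zero_pow hn2]


lemma mem_abs_le_one {t : ℝ} (h : t ∈ ({-1, 0, 1} : Set ℝ)) : |t| ≤ 1 := by
  simp only [Set.mem_insert_iff, Set.mem_singleton_iff] at h
  rcases h with h | h | h <;> simp [h]

lemma exists_delta (lam0 lam1 : ℝ) (h0 : 1/2 < lam0) (h01 : lam0 ≤ lam1) (h1 : lam1 < 1)
    (htrans : ∀ c : ℕ → ℝ, c 0 = 1 → (∀ n, c n ∈ ({-1, 0, 1} : Set ℝ)) →
      ∀ x ∈ Set.Icc lam0 lam1, (∑' n : ℕ, c n * x ^ n) = 0 →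
        deriv (fun y : ℝ => ∑' n : ℕ, c n * y ^ n) x ≠ 0) :
    ∃ δ > 0, ∀ c : ℕ → ℝ, c 0 = 1 → (∀ n, c n ∈ ({-1, 0, 1} : Set ℝ)) →
      ∀ x ∈ Set.Icc lam0 lam1,
        δ ≤ max |∑' n : ℕ, c n * x ^ n| |∑' n : ℕ, c n * ((n : ℝ) * x ^ (n - 1))| := by
  set r : ℝ := (1 + lam1) / 2 with hr_def
  have h2 : 1/2 < r := by rw [hr_def]; linarith
  have h1r : r < 1 := by rw [hr_def]; linarith
  have hr0 : (0:ℝ) < r := by linarith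
  have hsub : Set.Icc lam0 lam1 ⊆ Set.Ioo (-r) r := by
    intro x hx
    exact ⟨by linarith [hx.1], by rw [hr_def]; linarith [hx.2]⟩
  set K : Set (ℕ → ℝ) := {c | c 0 = 1 ∧ ∀ n, c n ∈ ({-1, 0, 1} : Set ℝ)} with hK_def
  have hKcompact : IsCompact K := by
    have h1' : K = (Set.pi Set.univ (fun _ : ℕ => ({-1, 0, 1} : Set ℝ))) ∩
        ((fun c : ℕ → ℝ => c 0) ⁻¹' {1}) := by
      ext c
      simp only [hK_def, Set.mem_setOf_eq, Set.mem_inter_iff, Set.mem_pi, Set.mem_univ,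
        forall_true_left, Set.mem_preimage, Set.mem_singleton_iff]
      tauto
    rw [h1']
    exact (isCompact_univ_pi fun _ => (Set.toFinite _).isCompact).inter_right
      (isClosed_singleton.preimage (continuous_apply 0))
  set T : Set ((ℕ → ℝ) × ℝ) := K ×ˢ Set.Icc lam0 lam1 with hT_def
  have hTcompact : IsCompact T := hKcompact.prod isCompact_Icc
  have hTne : T.Nonempty := by
    refine ⟨(fun n => if n = 0 then 1 else 0, lam0), ⟨⟨by simp, fun n => ?_⟩,
      Set.mem_Icc.2 ⟨le_refl _, h01⟩⟩⟩
    by_cases h : n = 0 <;> simp [h]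
  have habsT : ∀ p ∈ T, (∀ n, |p.1 n| ≤ 1) ∧ |p.2| ≤ r := by
    rintro ⟨c, x⟩ ⟨hcK, hx⟩
    refine ⟨fun n => mem_abs_le_one (hcK.2 n), ?_⟩
    have := hsub hx
    rw [abs_le]; exact ⟨this.1.le, this.2.le⟩
  set φ : (ℕ → ℝ) × ℝ → ℝ := fun p =>
    max |∑' n : ℕ, p.1 n * p.2 ^ n| |∑' n : ℕ, p.1 n * ((n : ℝ) * p.2 ^ (n - 1))| with hφ_def
  have hφcont : ContinuousOn φ T := by
    have hF : ContinuousOn (fun p : (ℕ → ℝ) × ℝ => ∑' n : ℕ, p.1 n * p.2 ^ n) T := by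
      refine continuousOn_tsum (fun i => Continuous.continuousOn ?_)
        (summable_geometric_of_lt_one hr0.le h1r) (fun n p hp => ?_)
      · exact ((continuous_apply i).comp continuous_fst).mul (continuous_snd.pow i)
      · obtain ⟨hc1, hxr⟩ := habsT p hp
        rw [Real.norm_eq_abs]
        exact term_bound hc1 hxr n n
    have hD : ContinuousOn
        (fun p : (ℕ → ℝ) × ℝ => ∑' n : ℕ, p.1 n * ((n : ℝ) * p.2 ^ (n - 1))) T := by
      refine continuousOn_tsum (fun i => Continuous.continuousOn ?_)
        (sum_u1 h2 h1r) (fun n p hp => ?_)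
      · exact ((continuous_apply i).comp continuous_fst).mul
          ((continuous_const.mul (continuous_snd.pow (i-1))))
      · obtain ⟨hc1, hxr⟩ := habsT p hp
        rw [Real.norm_eq_abs, show p.1 n * ((n:ℝ) * p.2 ^ (n-1))
            = (n:ℝ) * (p.1 n * p.2 ^ (n-1)) by ring, abs_mul,
          abs_of_nonneg (Nat.cast_nonneg n : (0:ℝ) ≤ n)]
        exact mul_le_mul_of_nonneg_left (term_bound hc1 hxr n (n-1)) (Nat.cast_nonneg n)
    exact ContinuousOn.sup hF.abs hD.abs
  obtain ⟨p₀, hp₀T, hmin'⟩ := hTcompact.exists_isMinOn hTne hφcont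
  have hmin : ∀ p ∈ T, φ p₀ ≤ φ p := fun p hp => hmin' hp
  refine ⟨φ p₀, ?_, fun c hc0 hcm x hx => hmin (c, x) ⟨⟨hc0, hcm⟩, hx⟩⟩
  rcases lt_or_eq_of_le (le_max_of_le_left (abs_nonneg _) : (0:ℝ) ≤ φ p₀) with h | h
  · exact h
  exfalso
  obtain ⟨⟨hc0, hcm⟩, hx₀⟩ := hp₀T
  have hF0 : (∑' n : ℕ, p₀.1 n * p₀.2 ^ n) = 0 := by
    have : |∑' n : ℕ, p₀.1 n * p₀.2 ^ n| ≤ 0 := (le_max_left _ _).trans h.symm.le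
    exact abs_eq_zero.1 (le_antisymm this (abs_nonneg _))
  have hD0 : (∑' n : ℕ, p₀.1 n * ((n : ℝ) * p₀.2 ^ (n - 1))) = 0 := by
    have : |∑' n : ℕ, p₀.1 n * ((n : ℝ) * p₀.2 ^ (n - 1))| ≤ 0 :=
      (le_max_right _ _).trans h.symm.le
    exact abs_eq_zero.1 (le_antisymm this (abs_nonneg _))
  have hder := (hasDerivAtF h2 h1r (fun n => mem_abs_le_one (hcm n)) (hsub hx₀)).deriv
  exact htrans p₀.1 hc0 hcm p₀.2 hx₀ hF0 (by rw [hder, hD0])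


lemma lipD {r : ℝ} (h2 : 1/2 < r) (h1 : r < 1) {c : ℕ → ℝ} (hc : ∀ n, |c n| ≤ 1)
    {s : Set ℝ} (hconv : Convex ℝ s) (hsub : s ⊆ Set.Ioo (-r) r) {x y : ℝ}
    (hx : x ∈ s) (hy : y ∈ s) :
    |(∑' n : ℕ, c n * ((n : ℝ) * y ^ (n - 1))) - (∑' n : ℕ, c n * ((n : ℝ) * x ^ (n - 1)))|
      ≤ ((∑' n : ℕ, (n : ℝ) * ((n - 1 : ℕ) : ℝ) * r ^ (n - 2)) + 1) * |y - x| := by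
  have key := hconv.norm_image_sub_le_of_norm_hasDerivWithin_le
    (f := fun w : ℝ => ∑' n : ℕ, c n * ((n : ℝ) * w ^ (n - 1)))
    (f' := fun w : ℝ => ∑' n : ℕ, c n * ((n : ℝ) * (((n - 1 : ℕ) : ℝ) * w ^ (n - 1 - 1))))
    (C := (∑' n : ℕ, (n : ℝ) * ((n - 1 : ℕ) : ℝ) * r ^ (n - 2)) + 1)
    (fun w hw => (hasDerivAtD h2 h1 hc (hsub hw)).hasDerivWithinAt)
    (fun w hw => ?_) hx hy
  · simpa [Real.norm_eq_abs] using key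
  · have hwr : |w| ≤ r := by
      have := hsub hw
      rw [abs_le]; exact ⟨this.1.le, this.2.le⟩
    have hb : ∀ n : ℕ, ‖c n * ((n : ℝ) * (((n - 1 : ℕ) : ℝ) * w ^ (n - 1 - 1)))‖
        ≤ (n : ℝ) * ((n - 1 : ℕ) : ℝ) * r ^ (n - 2) := by
      intro n
      rw [Real.norm_eq_abs, show c n * ((n:ℝ) * (((n-1:ℕ):ℝ) * w ^ (n-1-1)))
          = ((n:ℝ) * ((n-1:ℕ):ℝ)) * (c n * w ^ (n-1-1)) by ring, abs_mul,
        abs_of_nonneg (by positivity : (0:ℝ) ≤ (n:ℝ) * ((n-1:ℕ):ℝ)),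
        show n - 1 - 1 = n - 2 by omega]
      exact mul_le_mul_of_nonneg_left (term_bound hc hwr n (n-2)) (by positivity)
    calc ‖∑' n : ℕ, c n * ((n : ℝ) * (((n - 1 : ℕ) : ℝ) * w ^ (n - 1 - 1)))‖
        ≤ ∑' n : ℕ, (n : ℝ) * ((n - 1 : ℕ) : ℝ) * r ^ (n - 2) :=
          tsum_of_norm_bounded (sum_u2 h2 h1).hasSum hb
      _ ≤ _ := by linarith

end Stmt5Aux


/-- If `[λ₀,λ₁] ⊂ (1/2,1)` is an interval of transversality for the class of power series
`f(x) = 1 + Σ_{n≥1} c_n x^n`, `c_n ∈ {-1,0,1}`, then there is `C > 0` (depending only on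
the interval) such that `Leb{λ ∈ I : |g(λ)| ≤ ρ} ≤ C·ρ` for every `g` in the class and `ρ > 0`. -/
theorem stmt_5 (lam0 lam1 : ℝ) (h0 : 1/2 < lam0) (h01 : lam0 ≤ lam1) (h1 : lam1 < 1)
    (htrans : ∀ c : ℕ → ℝ, c 0 = 1 → (∀ n, c n ∈ ({-1, 0, 1} : Set ℝ)) →
      ∀ x ∈ Set.Icc lam0 lam1, (∑' n : ℕ, c n * x ^ n) = 0 →
        deriv (fun y : ℝ => ∑' n : ℕ, c n * y ^ n) x ≠ 0) :
    ∃ C > 0, ∀ c : ℕ → ℝ, c 0 = 1 → (∀ n, c n ∈ ({-1, 0, 1} : Set ℝ)) →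
      ∀ ρ > 0,
        volume {lam : ℝ | lam ∈ Set.Icc lam0 lam1 ∧ |∑' n : ℕ, c n * lam ^ n| ≤ ρ}
          ≤ ENNReal.ofReal (C * ρ) := by
  classical
  obtain ⟨δ, hδ0, hδP⟩ := Stmt5Aux.exists_delta lam0 lam1 h0 h01 h1 htrans
  set r : ℝ := (1 + lam1) / 2 with hr_def
  have h2 : 1/2 < r := by rw [hr_def]; linarith
  have h1r : r < 1 := by rw [hr_def]; linarith
  have hsub : Set.Icc lam0 lam1 ⊆ Set.Ioo (-r) r := by
    intro x hx
    exact ⟨by linarith [hx.1], by rw [hr_def]; linarith [hx.2]⟩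
  set M : ℝ := (∑' n : ℕ, (n : ℝ) * ((n - 1 : ℕ) : ℝ) * r ^ (n - 2)) + 1 with hM_def
  have hM1 : 1 ≤ M := by
    have h3 : 0 ≤ ∑' n : ℕ, (n : ℝ) * ((n - 1 : ℕ) : ℝ) * r ^ (n - 2) :=
      tsum_nonneg (fun n => by positivity)
    rw [hM_def]; linarith
  have hM0 : 0 < M := by linarith
  set h : ℝ := δ / (2 * M) with hh_def
  have hh0 : 0 < h := by rw [hh_def]; positivity
  set N : ℕ := ⌈(lam1 - lam0) / h⌉₊ + 1 with hN_def
  set C : ℝ := 4 * N / δ + (lam1 - lam0) / δ + 1 with hC_def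
  have hterm1 : (0:ℝ) ≤ 4 * N / δ := by positivity
  have hterm2 : (0:ℝ) ≤ (lam1 - lam0) / δ := div_nonneg (by linarith) hδ0.le
  have hC0 : 0 < C := by rw [hC_def]; linarith
  refine ⟨C, hC0, ?_⟩
  intro c hc0 hcm ρ hρ
  have hc1 : ∀ n, |c n| ≤ 1 := fun n => Stmt5Aux.mem_abs_le_one (hcm n)
  set E : Set ℝ := {lam : ℝ | lam ∈ Set.Icc lam0 lam1 ∧ |∑' n : ℕ, c n * lam ^ n| ≤ ρ}
    with hE_def
  show volume E ≤ ENNReal.ofReal (C * ρ)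
  rcases le_or_gt δ ρ with hcase | hcase
  · calc volume E ≤ volume (Set.Icc lam0 lam1) := measure_mono (fun x hx => hx.1)
      _ = ENNReal.ofReal (lam1 - lam0) := Real.volume_Icc
      _ ≤ ENNReal.ofReal (C * ρ) := by
          apply ENNReal.ofReal_le_ofReal
          have e1 : lam1 - lam0 = (lam1 - lam0) / δ * δ := (div_mul_cancel₀ _ hδ0.ne').symm
          have e2 : (lam1 - lam0) / δ * δ ≤ (lam1 - lam0) / δ * ρ :=
            mul_le_mul_of_nonneg_left hcase hterm2
          have e3 : (lam1 - lam0) / δ * ρ ≤ C * ρ :=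
            mul_le_mul_of_nonneg_right (by rw [hC_def]; linarith) hρ.le
          exact le_trans (le_trans (le_of_eq e1) e2) e3
  · have hpiece : ∀ k : ℕ,
        volume (E ∩ Set.Icc (lam0 + k * h) (lam0 + k * h + h)) ≤ ENNReal.ofReal (4 * ρ / δ) := by
      intro k
      set a : ℝ := lam0 + k * h with ha_def
      refine le_trans (Real.volume_le_diam _) (EMetric.diam_le ?_)
      rintro x ⟨hxE, hxJ⟩ y ⟨hyE, hyJ⟩
      rw [edist_dist, Real.dist_eq]
      apply ENNReal.ofReal_le_ofReal
      set s : Set ℝ := Set.Icc lam0 lam1 ∩ Set.Icc a (a + h) with hs_def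
      have hconv : Convex ℝ s := (convex_Icc _ _).inter (convex_Icc _ _)
      have hssub : s ⊆ Set.Ioo (-r) r := fun w hw => hsub hw.1
      set d : ℝ := ∑' n : ℕ, c n * ((n : ℝ) * x ^ (n - 1)) with hd_def
      have hdδ : δ ≤ |d| := by
        have hmax := hδP c hc0 hcm x hxE.1
        rcases le_max_iff.1 hmax with hA | hB
        · exfalso; linarith [hxE.2]
        · exact hB
      have hxs : x ∈ s := ⟨hxE.1, hxJ⟩
      have hys : y ∈ s := ⟨hyE.1, hyJ⟩
      have hDclose : ∀ w ∈ s, |(∑' n : ℕ, c n * ((n : ℝ) * w ^ (n - 1))) - d| ≤ δ / 2 := by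
        intro w hw
        have hl := Stmt5Aux.lipD h2 h1r hc1 hconv hssub hxs hw
        have hwx : |w - x| ≤ h := by
          rw [abs_le]
          exact ⟨by linarith [hw.2.1, hxJ.2], by linarith [hw.2.2, hxJ.1]⟩
        calc |(∑' n : ℕ, c n * ((n : ℝ) * w ^ (n - 1))) - d| ≤ M * |w - x| := hl
          _ ≤ M * h := mul_le_mul_of_nonneg_left hwx hM0.le
          _ = δ / 2 := by rw [hh_def]; field_simp
      have hG := hconv.norm_image_sub_le_of_norm_hasDerivWithin_le
        (f := fun w : ℝ => (∑' n : ℕ, c n * w ^ n) - d * w)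
        (f' := fun w : ℝ => (∑' n : ℕ, c n * ((n : ℝ) * w ^ (n - 1))) - d)
        (C := δ / 2)
        (fun w hw => ((Stmt5Aux.hasDerivAtF h2 h1r hc1 (hssub hw)).sub
          (by simpa using (hasDerivAt_id w).const_mul d)).hasDerivWithinAt)
        (fun w hw => by rw [Real.norm_eq_abs]; exact hDclose w hw) hxs hys
      rw [Real.norm_eq_abs, Real.norm_eq_abs] at hG
      set Fx : ℝ := ∑' n : ℕ, c n * x ^ n with hFx_def
      set Fy : ℝ := ∑' n : ℕ, c n * y ^ n with hFy_def
      have hFxρ : |Fx| ≤ ρ := hxE.2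
      have hFyρ : |Fy| ≤ ρ := hyE.2
      have key : δ * |y - x| ≤ 2 * ρ + δ / 2 * |y - x| := by
        have e0 : |d| * |y - x| = |d * (y - x)| := (abs_mul _ _).symm
        have e1 : d * (y - x) = (Fy - Fx) - ((Fy - d * y) - (Fx - d * x)) := by ring
        have e2 : |d * (y - x)| ≤ |Fy - Fx| + |(Fy - d * y) - (Fx - d * x)| := by
          rw [e1]; exact abs_sub _ _
        have e3 : |Fy - Fx| ≤ 2 * ρ := by
          have := abs_sub Fy Fx
          linarith
        have e4 : δ * |y - x| ≤ |d| * |y - x| :=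
          mul_le_mul_of_nonneg_right hdδ (abs_nonneg _)
        linarith
      rw [abs_sub_comm]
      rw [le_div_iff₀ hδ0]
      linarith
    have hcover : E ⊆ ⋃ k ∈ Finset.range N,
        (E ∩ Set.Icc (lam0 + k * h) (lam0 + k * h + h)) := by
      intro lam hlam
      have hlamI := hlam.1
      set k : ℕ := ⌊(lam - lam0) / h⌋₊ with hk_def
      have hnn : 0 ≤ (lam - lam0) / h := div_nonneg (by linarith [hlamI.1]) hh0.le
      have hfl : (k : ℝ) ≤ (lam - lam0) / h := Nat.floor_le hnn
      have hfl2 : (lam - lam0) / h < k + 1 := Nat.lt_floor_add_one _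
      have hkN : k < N := by
        have hle : (lam - lam0) / h ≤ (lam1 - lam0) / h :=
          (div_le_div_iff_of_pos_right hh0).2 (by linarith [hlamI.2])
        have : k ≤ ⌈(lam1 - lam0) / h⌉₊ :=
          le_trans (Nat.floor_le_floor hle) (Nat.floor_le_ceil _)
        omega
      have hlo : lam0 + k * h ≤ lam := by
        have := (le_div_iff₀ hh0).1 hfl
        linarith
      have hhi : lam ≤ lam0 + k * h + h := by
        have := (div_lt_iff₀ hh0).1 hfl2
        nlinarith
      exact Set.mem_biUnion (Finset.mem_range.2 hkN) ⟨hlam, hlo, hhi⟩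
    calc volume E ≤ volume (⋃ k ∈ Finset.range N,
          (E ∩ Set.Icc (lam0 + k * h) (lam0 + k * h + h))) := measure_mono hcover
      _ ≤ ∑ k ∈ Finset.range N,
            volume (E ∩ Set.Icc (lam0 + k * h) (lam0 + k * h + h)) :=
          measure_biUnion_finset_le _ _
      _ ≤ ∑ k ∈ Finset.range N, ENNReal.ofReal (4 * ρ / δ) :=
          Finset.sum_le_sum (fun k _ => hpiece k)
      _ = (N : ENNReal) * ENNReal.ofReal (4 * ρ / δ) := by
          rw [Finset.sum_const, Finset.card_range, nsmul_eq_mul]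
      _ = ENNReal.ofReal ((N : ℝ) * (4 * ρ / δ)) := by
          rw [← ENNReal.ofReal_natCast N, ← ENNReal.ofReal_mul (Nat.cast_nonneg N)]
      _ ≤ ENNReal.ofReal (C * ρ) := by
          apply ENNReal.ofReal_le_ofReal
          have e1 : (N : ℝ) * (4 * ρ / δ) = (4 * N / δ) * ρ := by
            field_simp
          have e2 : (4 * N / δ) * ρ ≤ C * ρ :=
            mul_le_mul_of_nonneg_right (by rw [hC_def]; linarith) hρ.le
          linarith
end

section
/- Assume the interval I = [λ_0, λ_1] ⊂ (1/2, 1) has the sublevel-set property: there is C > 0 such that for every polynomial g(x) = 1 + Σ_{n=1}^{m} c_n x^n with c_n ∈ {−1,0,1} and every ρ > 0, Leb{λ ∈ I : |g(λ)| ≤ ρ} ≤ Cρ. Then for every N ≥ 1 and every s > 0, the integral over I of the pair correlation R'_2(s, λ, 2^N) is at most C·λ_0/(2λ_0 − 1) · s, where R'_2(s, λ, 2^N) = 2^{−N} · #{ (ω, τ) ∈ ({0,1}^N)^2 : ω ≠ τ, |Σ_{n=0}^{N-1}(ω_n − τ_n)λ^n| ≤ s·2^{−N} }. -/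
open MeasureTheory

/-- `π_λ^N(ω) = Σ_{n=0}^{N-1} ω_n λ^n`. -/
noncomputable def piN (lam : ℝ) (N : ℕ) (ω : Fin N → Bool) : ℝ :=
  ∑ n : Fin N, if ω n then lam ^ (n : ℕ) else 0

namespace Stmt6
open Finset

noncomputable def bval (x : Bool) : ℝ := if x then 1 else 0

noncomputable def dfun {N : ℕ} (ω τ : Fin N → Bool) (n : ℕ) : ℝ :=
  if h : n < N then bval (ω ⟨n, h⟩) - bval (τ ⟨n, h⟩) else 0

lemma dfun_mem {N : ℕ} (ω τ : Fin N → Bool) (n : ℕ) :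
    dfun ω τ n ∈ ({-1, 0, 1} : Set ℝ) := by
  unfold dfun bval
  split
  · rename_i h
    cases ω ⟨n, h⟩ <;> cases τ ⟨n, h⟩ <;> simp
  · simp

lemma dfun_ne_iff {N : ℕ} (ω τ : Fin N → Bool) (i : Fin N) :
    dfun ω τ (i : ℕ) ≠ 0 ↔ ω i ≠ τ i := by
  unfold dfun bval
  rw [dif_pos i.isLt]
  simp only [Fin.eta]
  cases ω i <;> cases τ i <;> simp

lemma dfun_lt {N : ℕ} {ω τ : Fin N → Bool} {n : ℕ} (h : dfun ω τ n ≠ 0) : n < N := by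
  by_contra hn
  exact h (dif_neg hn)

lemma exists_dfun_ne {N : ℕ} {ω τ : Fin N → Bool} (h : ω ≠ τ) : ∃ n, dfun ω τ n ≠ 0 := by
  obtain ⟨i, hi⟩ := Function.ne_iff.mp h
  exact ⟨(i : ℕ), (dfun_ne_iff ω τ i).2 hi⟩

lemma diff_eq (lam : ℝ) {N : ℕ} (ω τ : Fin N → Bool) :
    piN lam N ω - piN lam N τ = ∑ n ∈ range N, dfun ω τ n * lam ^ n := by
  unfold piN
  rw [← Finset.sum_sub_distrib, ← Fin.sum_univ_eq_sum_range (fun n => dfun ω τ n * lam ^ n) N]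
  refine Finset.sum_congr rfl fun i _ => ?_
  unfold dfun bval
  rw [dif_pos i.isLt]
  simp only [Fin.eta]
  cases ω i <;> cases τ i <;> simp

noncomputable def fd {N : ℕ} (p : (Fin N → Bool) × (Fin N → Bool)) : ℕ :=
  sInf {n | dfun p.1 p.2 n ≠ 0}

lemma fd_spec {N : ℕ} {p : (Fin N → Bool) × (Fin N → Bool)} (h : p.1 ≠ p.2) :
    dfun p.1 p.2 (fd p) ≠ 0 ∧ ∀ n < fd p, dfun p.1 p.2 n = 0 := by
  have he := exists_dfun_ne h
  constructor
  · exact Nat.sInf_mem he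
  · intro n hn
    by_contra hc
    exact absurd hn (not_lt.2 (Nat.sInf_le hc))

lemma fd_lt {N : ℕ} {p : (Fin N → Bool) × (Fin N → Bool)} (h : p.1 ≠ p.2) : fd p < N :=
  dfun_lt (fd_spec h).1

lemma pair_measure (lam0 lam1 C : ℝ) (h0 : 1/2 < lam0)
    (hsub : ∀ (m : ℕ) (c : ℕ → ℝ), c 0 = 1 → (∀ n, c n ∈ ({-1, 0, 1} : Set ℝ)) →
      ∀ ρ > 0,
        volume {lam : ℝ | lam ∈ Set.Icc lam0 lam1 ∧
            |∑ n ∈ Finset.range (m + 1), c n * lam ^ n| ≤ ρ}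
          ≤ ENNReal.ofReal (C * ρ))
    {N : ℕ} (p : (Fin N → Bool) × (Fin N → Bool)) (hne : p.1 ≠ p.2)
    (ρ : ℝ) (hρ : 0 < ρ) :
    volume {lam : ℝ | lam ∈ Set.Icc lam0 lam1 ∧ |piN lam N p.1 - piN lam N p.2| ≤ ρ}
      ≤ ENNReal.ofReal (C * (ρ / lam0 ^ fd p)) := by
  have hlam0 : 0 < lam0 := by linarith
  set k := fd p with hk
  obtain ⟨hdk, hdlt⟩ := fd_spec hne
  have hkN : k < N := fd_lt hne
  set d := dfun p.1 p.2 with hd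
  set ε := d k with hε
  have hεmem : ε = -1 ∨ ε = 0 ∨ ε = 1 := by
    have := dfun_mem p.1 p.2 k
    simpa [← hd, ← hε, Set.mem_insert_iff, Set.mem_singleton_iff] using this
  have hε2 : ε * ε = 1 := by
    rcases hεmem with h|h|h
    · rw [h]; norm_num
    · exact absurd h hdk
    · rw [h]; norm_num
  have hεabs : |ε| = 1 := by
    rcases hεmem with h|h|h
    · rw [h]; norm_num
    · exact absurd h hdk
    · rw [h]; norm_num
  set c : ℕ → ℝ := fun n => ε * d (k + n) with hc
  have hc0 : c 0 = 1 := by simp [hc, ← hε, hε2]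
  have hcmem : ∀ n, c n ∈ ({-1, 0, 1} : Set ℝ) := by
    intro n
    have h2 : d (k+n) = -1 ∨ d (k+n) = 0 ∨ d (k+n) = 1 := by
      have := dfun_mem p.1 p.2 (k+n)
      simpa [← hd, Set.mem_insert_iff, Set.mem_singleton_iff] using this
    simp only [Set.mem_insert_iff, Set.mem_singleton_iff, hc]
    rcases hεmem with h1|h1|h1 <;> rcases h2 with h2|h2|h2 <;> rw [h1, h2] <;> norm_num
  set m := N - 1 - k with hm
  have hmk : m + 1 = N - k := by omega
  have hsplit : ∀ lam : ℝ,
      piN lam N p.1 - piN lam N p.2 = lam ^ k * ∑ n ∈ range (m+1), d (k+n) * lam ^ n := by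
    intro lam
    rw [diff_eq, hmk]
    have h1 : ∑ n ∈ range N, d n * lam ^ n = ∑ n ∈ Ico k N, d n * lam ^ n := by
      rw [range_eq_Ico, ← Finset.sum_Ico_consecutive _ (Nat.zero_le k) hkN.le]
      have hz : ∑ n ∈ Ico 0 k, d n * lam ^ n = 0 :=
        Finset.sum_eq_zero fun n hn => by rw [hdlt n (mem_Ico.mp hn).2, zero_mul]
      rw [hz, zero_add]
    rw [h1, Finset.sum_Ico_eq_sum_range, Finset.mul_sum]
    exact Finset.sum_congr rfl fun n _ => by rw [pow_add]; ring
  have hcsum : ∀ lam : ℝ,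
      ∑ n ∈ range (m+1), c n * lam ^ n = ε * ∑ n ∈ range (m+1), d (k+n) * lam ^ n := by
    intro lam
    rw [Finset.mul_sum]
    exact Finset.sum_congr rfl fun n _ => by rw [hc]; ring
  refine le_trans (measure_mono ?_) (hsub m c hc0 hcmem (ρ / lam0 ^ k) (by positivity))
  rintro lam ⟨hI, hle⟩
  refine ⟨hI, ?_⟩
  have hlam0' : lam0 ≤ lam := hI.1
  have hlamp : 0 < lam := lt_of_lt_of_le hlam0 hlam0'
  have hpow : (0:ℝ) < lam ^ k := by positivity
  have h2 : |∑ n ∈ range (m+1), c n * lam ^ n| * lam ^ k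
      = |piN lam N p.1 - piN lam N p.2| := by
    rw [hcsum, abs_mul, hεabs, one_mul, hsplit, abs_mul, abs_pow, abs_of_pos hlamp]
    ring
  have h3 : |∑ n ∈ range (m+1), c n * lam ^ n| ≤ ρ / lam ^ k := by
    rw [le_div_iff₀ hpow, h2]; exact hle
  refine h3.trans ?_
  gcongr


lemma count_le {N k : ℕ} (hk : k < N) :
    ((univ.filter (fun p : (Fin N → Bool) × (Fin N → Bool) => p.1 ≠ p.2 ∧ fd p = k)).card)
      ≤ 2 ^ (2 * N - 1 - k) := by
  classical
  set t : Fin N → Finset (Bool × Bool) := fun j =>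
    if (j : ℕ) < k then {(false, false), (true, true)}
    else if (j : ℕ) = k then {(false, true), (true, false)}
    else Finset.univ with ht
  have hcard : (Fintype.piFinset t).card = 2 ^ (2 * N - 1 - k) := by
    rw [Fintype.card_piFinset]
    have h1 : ∀ j : Fin N, (t j).card = 2 * (if (j : ℕ) ≤ k then 1 else 2) := by
      intro j
      rw [ht]
      by_cases hj1 : (j : ℕ) < k
      · simp only [if_pos hj1, if_pos hj1.le]
        decide
      · by_cases hj2 : (j : ℕ) = k
        · simp only [if_neg hj1, if_pos hj2, if_pos (le_of_eq hj2)]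
          decide
        · have hj3 : ¬ (j : ℕ) ≤ k := by omega
          simp only [if_neg hj1, if_neg hj2, if_neg hj3]
          simp [Finset.card_univ]
    calc ∏ j : Fin N, (t j).card
        = ∏ j : Fin N, (2 * (if (j : ℕ) ≤ k then 1 else 2)) := Finset.prod_congr rfl fun j _ => h1 j
      _ = (∏ _j : Fin N, 2) * ∏ j : Fin N, (if (j : ℕ) ≤ k then 1 else 2) :=
          Finset.prod_mul_distrib
      _ = 2 ^ N * ∏ j ∈ range N, (if j ≤ k then 1 else 2) := by
          rw [Finset.prod_const, Finset.card_univ, Fintype.card_fin,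
            Fin.prod_univ_eq_prod_range (fun j => if j ≤ k then 1 else 2) N]
      _ = 2 ^ N * 2 ^ (N - (k + 1)) := by
          rw [Finset.prod_ite]
          have hf : (range N).filter (fun j => ¬ j ≤ k) = Ico (k + 1) N := by
            ext j; simp only [mem_filter, mem_range, mem_Ico, not_le]; omega
          rw [Finset.prod_const_one, one_mul, Finset.prod_const, hf, Nat.card_Ico]
      _ = 2 ^ (2 * N - 1 - k) := by rw [← pow_add]; congr 1; omega
  rw [← hcard]
  refine Finset.card_le_card_of_injOn (fun p => fun j => (p.1 j, p.2 j)) ?_ ?_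
  · intro p hp
    rw [Finset.mem_coe, Finset.mem_filter] at hp
    obtain ⟨-, hne, hfd⟩ := hp
    rw [Finset.mem_coe, Fintype.mem_piFinset]
    intro j
    rw [ht]
    dsimp only
    split_ifs with h1 h2
    · have hz : dfun p.1 p.2 (j : ℕ) = 0 := (fd_spec hne).2 _ (hfd ▸ h1)
      have heq : p.1 j = p.2 j := by
        by_contra hcon
        exact (dfun_ne_iff p.1 p.2 j).2 hcon hz
      rw [heq]
      cases p.2 j <;> simp
    · have hne2 : dfun p.1 p.2 (j : ℕ) ≠ 0 := by
        rw [h2, ← hfd]; exact (fd_spec hne).1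
      have hne3 : p.1 j ≠ p.2 j := (dfun_ne_iff p.1 p.2 j).1 hne2
      cases hb1 : p.1 j <;> cases hb2 : p.2 j <;>
        first
          | (exfalso; rw [hb1, hb2] at hne3; exact hne3 rfl)
          | simp
    · exact Finset.mem_univ _
  · intro p _ q _ h
    have h1 : p.1 = q.1 := funext fun j => ((Prod.mk.injEq _ _ _ _).mp (congrFun h j)).1
    have h2 : p.2 = q.2 := funext fun j => ((Prod.mk.injEq _ _ _ _).mp (congrFun h j)).2
    exact Prod.ext h1 h2


lemma geom_le {r : ℝ} (h0 : 0 ≤ r) (h1 : r < 1) (N : ℕ) :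
    ∑ i ∈ range N, r ^ i ≤ (1 - r)⁻¹ := by
  have h1r : 0 < 1 - r := by linarith
  rw [geom_sum_eq (ne_of_lt h1)]
  have he : (r ^ N - 1) / (r - 1) = (1 - r ^ N) / (1 - r) := by
    rw [← neg_div_neg_eq]; ring_nf
  rw [he, ← one_div]
  have hp : 0 ≤ r ^ N := pow_nonneg h0 N
  gcongr <;> linarith

end Stmt6

/-- Pair correlation for `A'_N(λ)`:
`R'_2(s, λ, 2^N) = 2^{-N} · #{(ω,τ) : ω ≠ τ, |π_λ^N(ω) - π_λ^N(τ)| ≤ s·2^{-N}}`. -/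
noncomputable def R2' (s lam : ℝ) (N : ℕ) : ℝ :=
  ((Finset.univ.filter (fun p : (Fin N → Bool) × (Fin N → Bool) =>
      p.1 ≠ p.2 ∧ |piN lam N p.1 - piN lam N p.2| ≤ s / 2 ^ N)).card : ℝ) / 2 ^ N

/-- Under the transversality sublevel-set bound on `I = [λ₀,λ₁] ⊂ (1/2,1)`, the averaged
pair correlation satisfies `∫_I R'_2(s,λ,2^N) dλ ≤ C·λ₀/(2λ₀-1) · s` for all `N ≥ 1`, `s > 0`. -/
theorem stmt_6 (lam0 lam1 : ℝ) (h0 : 1/2 < lam0) (h01 : lam0 ≤ lam1) (h1 : lam1 < 1)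
    (C : ℝ) (hC : 0 < C)
    (hsub : ∀ (m : ℕ) (c : ℕ → ℝ), c 0 = 1 → (∀ n, c n ∈ ({-1, 0, 1} : Set ℝ)) →
      ∀ ρ > 0,
        volume {lam : ℝ | lam ∈ Set.Icc lam0 lam1 ∧
            |∑ n ∈ Finset.range (m + 1), c n * lam ^ n| ≤ ρ}
          ≤ ENNReal.ofReal (C * ρ)) :
    ∀ N : ℕ, 1 ≤ N → ∀ s : ℝ, 0 < s →
      (∫ lam in lam0..lam1, R2' s lam N) ≤ C * lam0 / (2 * lam0 - 1) * s := by
  intro N hN s hs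
  classical
  have hlam0 : 0 < lam0 := by linarith
  set F : (Fin N → Bool) × (Fin N → Bool) → ℝ → ℝ := fun p lam =>
    if (p.1 ≠ p.2 ∧ |piN lam N p.1 - piN lam N p.2| ≤ s / 2 ^ N) then 1 else 0 with hF
  have hR : ∀ lam : ℝ, R2' s lam N = (∑ p, F p lam) / 2 ^ N := by
    intro lam
    rw [R2', Finset.card_filter]
    push_cast
    rfl
  have hcont : ∀ (ω : Fin N → Bool), Continuous fun lam : ℝ => piN lam N ω := by
    intro ω
    unfold piN
    apply continuous_finset_sum
    intro i _
    by_cases h : ω i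
    · simp only [h, if_true]; exact continuous_pow _
    · simp only [h, if_false]; exact continuous_const
  set A : (Fin N → Bool) × (Fin N → Bool) → Set ℝ := fun p =>
    {lam : ℝ | |piN lam N p.1 - piN lam N p.2| ≤ s / 2 ^ N} with hA
  have hmeasA : ∀ p, MeasurableSet (A p) := fun p =>
    (isClosed_le (((hcont p.1).sub (hcont p.2)).abs) continuous_const).measurableSet
  have hFeq : ∀ p, p.1 ≠ p.2 → F p = (A p).indicator 1 := by
    intro p hp
    funext lam
    simp [hF, hp, hA, Set.indicator_apply]
  have hFeq0 : ∀ p, p.1 = p.2 → F p = fun _ => (0:ℝ) := by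
    intro p hp
    funext lam
    simp [hF, hp]
  have hint : ∀ p, IntervalIntegrable (F p) volume lam0 lam1 := by
    intro p
    by_cases hp : p.1 ≠ p.2
    · rw [hFeq p hp, intervalIntegrable_iff_integrableOn_Ioc_of_le h01, IntegrableOn,
        MeasureTheory.integrable_indicator_iff (hmeasA p)]
      refine integrableOn_const (ne_of_lt ?_)
      refine lt_of_le_of_lt ?_ (measure_Ioc_lt_top (a := lam0) (b := lam1) (μ := volume))
      rw [Measure.restrict_apply (hmeasA p)]
      exact measure_mono Set.inter_subset_right
    · push_neg at hp
      rw [hFeq0 p hp]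
      exact intervalIntegrable_const
  have hIeq : (∫ lam in lam0..lam1, R2' s lam N)
      = (∑ p, ∫ lam in lam0..lam1, F p lam) / 2 ^ N := by
    simp_rw [hR]
    rw [intervalIntegral.integral_div, intervalIntegral.integral_finset_sum
      (fun p _ => hint p)]
  have hbound : ∀ p, (∫ lam in lam0..lam1, F p lam)
      ≤ (if p.1 ≠ p.2 then C * (s / 2 ^ N / lam0 ^ Stmt6.fd p) else 0) := by
    intro p
    by_cases hp : p.1 ≠ p.2
    · rw [if_pos hp, hFeq p hp, intervalIntegral.integral_of_le h01,
        MeasureTheory.integral_indicator_one (hmeasA p), measureReal_def, Measure.restrict_apply (hmeasA p)]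
      refine ENNReal.toReal_le_of_le_ofReal (by positivity) ?_
      refine le_trans (measure_mono ?_)
        (Stmt6.pair_measure lam0 lam1 C h0 hsub p hp (s / 2 ^ N) (by positivity))
      rintro lam ⟨hAp, hIoc⟩
      exact ⟨Set.Ioc_subset_Icc_self hIoc, hAp⟩
    · push_neg at hp
      rw [if_neg (not_not.2 hp), hFeq0 p hp, intervalIntegral.integral_const, smul_zero]
  -- sum over pairs, grouped by first difference
  set S := Finset.univ.filter
    (fun p : (Fin N → Bool) × (Fin N → Bool) => p.1 ≠ p.2) with hS
  have hsum1 : (∑ p, ∫ lam in lam0..lam1, F p lam)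
      ≤ ∑ p ∈ S, C * (s / 2 ^ N / lam0 ^ Stmt6.fd p) := by
    rw [hS, Finset.sum_filter]
    exact Finset.sum_le_sum fun p _ => hbound p
  have hfiber : ∑ p ∈ S, C * (s / 2 ^ N / lam0 ^ Stmt6.fd p)
      = ∑ k ∈ Finset.range N, ∑ p ∈ S.filter (fun p => Stmt6.fd p = k),
          C * (s / 2 ^ N / lam0 ^ Stmt6.fd p) := by
    refine (Finset.sum_fiberwise_of_maps_to ?_ _).symm
    intro p hp
    rw [hS, Finset.mem_filter] at hp
    exact Finset.mem_range.2 (Stmt6.fd_lt hp.2)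
  have hinner : ∀ k ∈ Finset.range N,
      ∑ p ∈ S.filter (fun p => Stmt6.fd p = k), C * (s / 2 ^ N / lam0 ^ Stmt6.fd p)
        ≤ (2:ℝ) ^ (2 * N - 1 - k) * (C * (s / 2 ^ N / lam0 ^ k)) := by
    intro k hk
    rw [Finset.mem_range] at hk
    have e1 : ∑ p ∈ S.filter (fun p => Stmt6.fd p = k), C * (s / 2 ^ N / lam0 ^ Stmt6.fd p)
        = ((S.filter (fun p => Stmt6.fd p = k)).card : ℝ) * (C * (s / 2 ^ N / lam0 ^ k)) := by
      rw [Finset.sum_congr rfl (fun p hp => by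
        rw [(Finset.mem_filter.mp hp).2]), Finset.sum_const, nsmul_eq_mul]
    rw [e1]
    have e2 : S.filter (fun p => Stmt6.fd p = k)
        = Finset.univ.filter (fun p : (Fin N → Bool) × (Fin N → Bool) =>
            p.1 ≠ p.2 ∧ Stmt6.fd p = k) := by
      rw [hS, Finset.filter_filter]
    have e3 : ((S.filter (fun p => Stmt6.fd p = k)).card : ℝ) ≤ (2:ℝ) ^ (2 * N - 1 - k) := by
      rw [e2]
      have := Stmt6.count_le (N := N) (k := k) hk
      calc ((Finset.univ.filter (fun p : (Fin N → Bool) × (Fin N → Bool) =>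
            p.1 ≠ p.2 ∧ Stmt6.fd p = k)).card : ℝ)
          ≤ ((2 ^ (2 * N - 1 - k) : ℕ) : ℝ) := by exact_mod_cast this
        _ = (2:ℝ) ^ (2 * N - 1 - k) := by push_cast; ring
    have hpos : (0:ℝ) ≤ C * (s / 2 ^ N / lam0 ^ k) := by positivity
    exact mul_le_mul_of_nonneg_right e3 hpos
  set r : ℝ := (2 * lam0)⁻¹ with hr
  have hterm : ∀ k ∈ Finset.range N,
      (2:ℝ) ^ (2 * N - 1 - k) * (C * (s / 2 ^ N / lam0 ^ k)) / 2 ^ N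
        = C * s / 2 * r ^ k := by
    intro k hk
    rw [Finset.mem_range] at hk
    have hpow2 : (2:ℝ) ^ (2 * N - 1 - k) * 2 ^ (k + 1) = 2 ^ (2 * N) := by
      rw [← pow_add]; congr 1; omega
    have ha : (2:ℝ) ^ (2 * N - 1 - k) = 2 ^ (2 * N) / 2 ^ (k + 1) := by
      rw [eq_div_iff (by positivity)]; exact hpow2
    rw [ha, hr, mul_inv, mul_pow, inv_pow, inv_pow]
    field_simp
    ring
  have hr0 : 0 ≤ r := by rw [hr]; positivity
  have hr1 : r < 1 := by
    rw [hr]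
    rw [inv_lt_one_iff₀]
    right; linarith
  have h2l1 : (0:ℝ) < 2 * lam0 - 1 := by linarith
  have hfinal : C * s / 2 * (1 - r)⁻¹ = C * lam0 / (2 * lam0 - 1) * s := by
    rw [hr]
    have hne1 : (1 - (2 * lam0)⁻¹) ≠ 0 := by
      have : (2 * lam0)⁻¹ < 1 := hr1
      intro h; rw [sub_eq_zero] at h; rw [← h] at this; exact lt_irrefl _ this
    field_simp
  calc (∫ lam in lam0..lam1, R2' s lam N)
      = (∑ p, ∫ lam in lam0..lam1, F p lam) / 2 ^ N := hIeq
    _ ≤ (∑ k ∈ Finset.range N, (2:ℝ) ^ (2 * N - 1 - k) * (C * (s / 2 ^ N / lam0 ^ k)))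
          / 2 ^ N := by
        gcongr
        exact hsum1.trans (le_of_le_of_eq (le_of_eq hfiber) rfl) |>.trans
          (Finset.sum_le_sum hinner)
    _ = ∑ k ∈ Finset.range N, (2:ℝ) ^ (2 * N - 1 - k) * (C * (s / 2 ^ N / lam0 ^ k))
          / 2 ^ N := Finset.sum_div _ _ _
    _ = ∑ k ∈ Finset.range N, C * s / 2 * r ^ k := Finset.sum_congr rfl hterm
    _ = C * s / 2 * ∑ k ∈ Finset.range N, r ^ k := (Finset.mul_sum _ _ _).symm
    _ ≤ C * s / 2 * (1 - r)⁻¹ := by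
        refine mul_le_mul_of_nonneg_left (Stmt6.geom_le hr0 hr1 N) (by positivity)
    _ = C * lam0 / (2 * lam0 - 1) * s := hfinal
end

section
/- Suppose λ_0 ∈ (1/2, 1) is a zero of a polynomial 1 + Σ_{n=1}^k c_n x^n with c_n ∈ {−1, 0, 1}. Then there exist ρ < 2 and a constant C_2 > 0 such that the number of distinct values of Σ_{n=0}^{N-1} a_n λ_0^n over a_n ∈ {0,1} is at most C_2 · ρ^N for all N. -/
open scoped Classical

/-- The finite set `A'_N(λ)` of values `Σ_{n=0}^{N-1} a_n λ^n`, `a_n ∈ {0,1}`,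
counted without multiplicity. -/
noncomputable def AprimeF (lam : ℝ) (N : ℕ) : Finset ℝ :=
  (Finset.univ : Finset (Fin N → Bool)).image
    (fun a => ∑ n : Fin N, if a n then lam ^ (n : ℕ) else 0)

lemma AprimeF_card_le (lam : ℝ) (N : ℕ) : (AprimeF lam N).card ≤ 2 ^ N := by
  calc (AprimeF lam N).card ≤ (Finset.univ : Finset (Fin N → Bool)).card :=
        Finset.card_image_le
    _ = 2 ^ N := by simp [Finset.card_univ]

lemma AprimeF_split (lam : ℝ) (K m : ℕ) :
    AprimeF lam (K + m) ⊆
      ((AprimeF lam K) ×ˢ (AprimeF lam m)).image (fun q => q.1 + lam ^ K * q.2) := by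
  intro x hx
  simp only [AprimeF, Finset.mem_image, Finset.mem_univ, true_and] at hx
  obtain ⟨a, ha⟩ := hx
  simp only [Finset.mem_image, Finset.mem_product]
  refine ⟨(∑ n : Fin K, if a (Fin.castAdd m n) then lam ^ (n : ℕ) else 0,
          ∑ n : Fin m, if a (Fin.natAdd K n) then lam ^ (n : ℕ) else 0), ?_, ?_⟩
  · constructor <;>
    · simp only [AprimeF, Finset.mem_image, Finset.mem_univ, true_and]
      exact ⟨_, rfl⟩
  · rw [← ha, Fin.sum_univ_add]
    congr 1
    rw [Finset.mul_sum]
    refine Finset.sum_congr rfl fun i _ => ?_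
    simp [Fin.natAdd, pow_add, mul_ite]

lemma sum_range_shift (g : ℕ → ℝ) (k : ℕ) :
    ∑ i ∈ Finset.range k, g (i + 1) = ∑ n ∈ Finset.Icc 1 k, g n := by
  rw [← Finset.Ico_add_one_right_eq_Icc, Finset.sum_Ico_eq_sum_range]
  exact Finset.sum_congr (by rw [Nat.add_sub_cancel]) fun i _ => by rw [Nat.add_comm]

/-- If `λ₀ ∈ (1/2,1)` is a zero of a polynomial `1 + Σ_{n=1}^k c_n x^n` with
`c_n ∈ {-1,0,1}`, then the number of distinct values of `A'_N(λ₀)` is at most `C₂·ρ^N`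
for some `ρ < 2` and `C₂ > 0`. -/
theorem stmt_9 (lam0 : ℝ) (hlam0 : lam0 ∈ Set.Ioo (1/2 : ℝ) 1)
    (k : ℕ) (hk : 1 ≤ k) (c : ℕ → ℝ) (hc : ∀ n, c n ∈ ({-1, 0, 1} : Set ℝ))
    (hzero : 1 + ∑ n ∈ Finset.Icc 1 k, c n * lam0 ^ n = 0) :
    ∃ ρ : ℝ, ρ < 2 ∧ ∃ C2 : ℝ, 0 < C2 ∧
      ∀ N : ℕ, ((AprimeF lam0 N).card : ℝ) ≤ C2 * ρ ^ N := by
  set K := k + 1 with hK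
  -- the two colliding words
  set u : Fin K → Bool := fun n => if (n : ℕ) = 0 then true else
    (if c (n : ℕ) = 1 then true else false) with hu
  set v : Fin K → Bool := fun n => if (n : ℕ) = 0 then false else
    (if c (n : ℕ) = -1 then true else false) with hv
  have huv : u ≠ v := by
    intro h
    have := congrFun h 0
    simp [hu, hv] at this
  -- values of u and v
  have hsum1 : ∑ n : Fin K, (if u n then lam0 ^ (n : ℕ) else 0)
      = 1 + ∑ n ∈ Finset.Icc 1 k, (if c n = 1 then lam0 ^ n else 0) := by
    rw [Fin.sum_univ_succ]
    have h0 : (if u 0 then lam0 ^ ((0 : Fin K) : ℕ) else 0) = 1 := by simp [hu]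
    have h1 : ∀ i : Fin k, (if u i.succ then lam0 ^ ((i.succ : Fin K) : ℕ) else 0)
        = (if c ((i : ℕ) + 1) = 1 then lam0 ^ ((i : ℕ) + 1) else 0) := by
      intro i
      simp only [hu, Fin.val_succ]
      by_cases h : c ((i : ℕ) + 1) = 1 <;> simp [h]
    rw [h0, Finset.sum_congr rfl (fun i _ => h1 i),
      Fin.sum_univ_eq_sum_range (fun i => if c (i + 1) = 1 then lam0 ^ (i + 1) else 0),
      sum_range_shift (fun n => if c n = 1 then lam0 ^ n else 0)]
  have hsum2 : ∑ n : Fin K, (if v n then lam0 ^ (n : ℕ) else 0)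
      = ∑ n ∈ Finset.Icc 1 k, (if c n = -1 then lam0 ^ n else 0) := by
    rw [Fin.sum_univ_succ]
    have h0 : (if v 0 then lam0 ^ ((0 : Fin K) : ℕ) else 0) = 0 := by simp [hv]
    rw [h0, zero_add]
    have h1 : ∀ i : Fin k, (if v i.succ then lam0 ^ ((i.succ : Fin K) : ℕ) else 0)
        = (if c ((i : ℕ) + 1) = -1 then lam0 ^ ((i : ℕ) + 1) else 0) := by
      intro i
      simp only [hv, Fin.val_succ]
      by_cases h : c ((i : ℕ) + 1) = -1 <;> simp [h]
    rw [Finset.sum_congr rfl (fun i _ => h1 i),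
      Fin.sum_univ_eq_sum_range (fun i => if c (i + 1) = -1 then lam0 ^ (i + 1) else 0),
      sum_range_shift (fun n => if c n = -1 then lam0 ^ n else 0)]
  -- equality of the two values from hzero
  have hceq : ∀ n ∈ Finset.Icc 1 k, c n * lam0 ^ n
      = (if c n = 1 then lam0 ^ n else 0) - (if c n = -1 then lam0 ^ n else 0) := by
    intro n _
    have h := hc n
    simp only [Set.mem_insert_iff, Set.mem_singleton_iff] at h
    rcases h with h | h | h <;> norm_num [h]
  have hvals : ∑ n : Fin K, (if u n then lam0 ^ (n : ℕ) else 0)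
      = ∑ n : Fin K, (if v n then lam0 ^ (n : ℕ) else 0) := by
    rw [hsum1, hsum2]
    have : ∑ n ∈ Finset.Icc 1 k, c n * lam0 ^ n
        = ∑ n ∈ Finset.Icc 1 k, ((if c n = 1 then lam0 ^ n else 0) - (if c n = -1 then lam0 ^ n else 0)) :=
      Finset.sum_congr rfl hceq
    rw [this, Finset.sum_sub_distrib] at hzero
    linarith
  -- therefore the prefix-value set has cardinality < 2^K
  have hcardK : (AprimeF lam0 K).card < 2 ^ K := by
    have hle : (AprimeF lam0 K).card ≤ 2 ^ K := AprimeF_card_le lam0 K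
    rcases lt_or_eq_of_le hle with h | h
    · exact h
    · exfalso
      have hcu : ((Finset.univ : Finset (Fin K → Bool))).card = 2 ^ K := by
        simp [Finset.card_univ]
      have : Set.InjOn (fun a : Fin K → Bool => ∑ n : Fin K, if a n then lam0 ^ (n : ℕ) else 0)
          (Finset.univ : Finset (Fin K → Bool)) := by
        rw [← Finset.card_image_iff]
        rw [show ((Finset.univ : Finset (Fin K → Bool)).image
          (fun a => ∑ n : Fin K, if a n then lam0 ^ (n : ℕ) else 0)) = AprimeF lam0 K from rfl,
          h, hcu]
      exact huv (this (Finset.mem_univ u) (Finset.mem_univ v) hvals)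
  have hM1 : (1 : ℝ) ≤ ((2 : ℝ) ^ K - 1) := by
    have : (2 : ℝ) ^ K ≥ 2 := by
      calc (2:ℝ) ^ K ≥ 2 ^ 1 := by
            apply pow_le_pow_right₀ (by norm_num) (by omega)
        _ = 2 := by norm_num
    linarith
  set M : ℝ := (2 : ℝ) ^ K - 1 with hMdef
  have hcardKR : ((AprimeF lam0 K).card : ℝ) ≤ M := by
    have : ((AprimeF lam0 K).card : ℝ) + 1 ≤ ((2 ^ K : ℕ) : ℝ) := by
      exact_mod_cast Nat.succ_le_of_lt hcardK
    push_cast at this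
    simp only [hMdef]
    linarith
  set ρ : ℝ := M ^ ((K : ℝ)⁻¹) with hρdef
  have hKpos : (0 : ℝ) < K := by positivity
  have hMpos : (0 : ℝ) < M := by linarith
  have hρpowK : ρ ^ K = M := by
    rw [hρdef, ← Real.rpow_natCast (M ^ ((K : ℝ)⁻¹)) K, ← Real.rpow_mul (le_of_lt hMpos)]
    rw [inv_mul_cancel₀ (ne_of_gt hKpos), Real.rpow_one]
  have hρ1 : (1 : ℝ) ≤ ρ := by
    rw [hρdef]
    exact Real.one_le_rpow hM1 (by positivity)
  have hρlt2 : ρ < 2 := by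
    have h1 : ρ < ((2 : ℝ) ^ K) ^ ((K : ℝ)⁻¹) := by
      apply Real.rpow_lt_rpow (le_of_lt hMpos) _ (by positivity)
      simp only [hMdef]; linarith
    have h2 : ((2 : ℝ) ^ K) ^ ((K : ℝ)⁻¹) = 2 := by
      rw [← Real.rpow_natCast (2 : ℝ) K, ← Real.rpow_mul (by norm_num)]
      rw [mul_inv_cancel₀ (ne_of_gt hKpos), Real.rpow_one]
    rwa [h2] at h1
  refine ⟨ρ, hρlt2, (2 : ℝ) ^ K, by positivity, ?_⟩
  intro N
  induction N using Nat.strong_induction_on with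
  | _ N ih =>
    by_cases hN : N < K
    · calc ((AprimeF lam0 N).card : ℝ) ≤ ((2 ^ N : ℕ) : ℝ) := by
            exact_mod_cast AprimeF_card_le lam0 N
        _ = (2 : ℝ) ^ N := by push_cast; ring
        _ ≤ (2 : ℝ) ^ K := by
            apply pow_le_pow_right₀ (by norm_num) (by omega)
        _ ≤ (2 : ℝ) ^ K * ρ ^ N := by
            nlinarith [one_le_pow₀ (n := N) hρ1, pow_pos (show (0:ℝ) < 2 by norm_num) K]
    · push_neg at hN
      set m := N - K with hm
      have hNm : N = K + m := by omega
      have hmlt : m < N := by omega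
      have hsub := AprimeF_split lam0 K m
      have hcard : (AprimeF lam0 (K + m)).card ≤ (AprimeF lam0 K).card * (AprimeF lam0 m).card := by
        calc (AprimeF lam0 (K + m)).card
            ≤ (((AprimeF lam0 K) ×ˢ (AprimeF lam0 m)).image
                (fun q => q.1 + lam0 ^ K * q.2)).card := Finset.card_le_card hsub
          _ ≤ ((AprimeF lam0 K) ×ˢ (AprimeF lam0 m)).card := Finset.card_image_le
          _ = (AprimeF lam0 K).card * (AprimeF lam0 m).card := Finset.card_product _ _
      have hmR : ((AprimeF lam0 m).card : ℝ) ≤ (2 : ℝ) ^ K * ρ ^ m := ih m hmlt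
      calc ((AprimeF lam0 N).card : ℝ)
          = ((AprimeF lam0 (K + m)).card : ℝ) := by rw [hNm]
        _ ≤ ((AprimeF lam0 K).card : ℝ) * ((AprimeF lam0 m).card : ℝ) := by
            exact_mod_cast hcard
        _ ≤ M * ((2 : ℝ) ^ K * ρ ^ m) := by
            apply mul_le_mul hcardKR hmR (Nat.cast_nonneg _) (le_of_lt hMpos)
        _ = (2 : ℝ) ^ K * (ρ ^ K * ρ ^ m) := by rw [← hρpowK]; ring
        _ = (2 : ℝ) ^ K * ρ ^ N := by rw [← pow_add, ← hNm]
end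

section
/- Let I = [1/2, 0.668] and suppose that for every polynomial p with constant term 1, coefficients in {−1,0,1}, and any degree, and every ρ > 0, Leb{λ ∈ I : |p(λ)| ≤ ρ} ≤ C ρ. Let (α_N) be positive reals with Σ_N 3^N α_N < ∞. Then for Lebesgue-almost every λ ∈ I, the minimal gap g_N(λ) of A'_N(λ) (the smallest positive difference between distinct elements) satisfies g_N(λ) > α_N for infinitely many N. -/
open MeasureTheory Filter

/-- The minimal gap of `A'_N(λ)`: the smallest positive difference between elements. -/
noncomputable def minGap (lam : ℝ) (N : ℕ) : ℝ :=
  sInf {d : ℝ | 0 < d ∧ ∃ x ∈ Aprime lam N, ∃ y ∈ Aprime lam N, d = |x - y|}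

noncomputable def fcoef : Fin 3 → ℝ := ![(-1 : ℝ), 0, 1]

noncomputable def cOf (m : ℕ) (v : Fin m → Fin 3) : ℕ → ℝ :=
  fun n => if n = 0 then 1 else if h : n - 1 < m then fcoef (v ⟨n - 1, h⟩) else 0

lemma fcoef_mem (i : Fin 3) : fcoef i ∈ ({-1, 0, 1} : Set ℝ) := by
  fin_cases i <;> simp [fcoef]

lemma cOf_zero (m : ℕ) (v : Fin m → Fin 3) : cOf m v 0 = 1 := by simp [cOf]

lemma cOf_mem (m : ℕ) (v : Fin m → Fin 3) (n : ℕ) : cOf m v n ∈ ({-1, 0, 1} : Set ℝ) := by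
  unfold cOf
  split_ifs with h1 h2
  · simp
  · exact fcoef_mem _
  · simp

/-- The bad set at level `N`. -/
noncomputable def badSet (α : ℕ → ℝ) (N : ℕ) : Set ℝ :=
  ⋃ k ∈ Finset.range N, ⋃ v : Fin (N - 1 - k) → Fin 3,
    {lam : ℝ | lam ∈ Set.Icc (1/2 : ℝ) 0.668 ∧
      |∑ n ∈ Finset.range ((N - 1 - k) + 1), cOf (N - 1 - k) v n * lam ^ n|
        ≤ 2 ^ k * (2 * α N)}

lemma geom_aux (N : ℕ) :
    (∑ k ∈ Finset.range N, (3 : ℝ) ^ (N - 1 - k) * 2 ^ k) ≤ 3 ^ N - 2 ^ N := by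
  induction N with
  | zero => simp
  | succ N ih =>
    rw [Finset.sum_range_succ]
    have h1 : ∀ k ∈ Finset.range N, (3 : ℝ) ^ (N + 1 - 1 - k) * 2 ^ k
        = 3 * ((3 : ℝ) ^ (N - 1 - k) * 2 ^ k) := by
      intro k hk
      rw [Finset.mem_range] at hk
      have : N + 1 - 1 - k = (N - 1 - k) + 1 := by omega
      rw [this, pow_succ]
      ring
    rw [Finset.sum_congr rfl h1, ← Finset.mul_sum]
    have : N + 1 - 1 - N = 0 := by omega
    rw [this]
    have h3 : (3:ℝ) ^ (N+1) = 3 * 3 ^ N := by ring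
    have h2 : (2:ℝ) ^ (N+1) = 2 * 2 ^ N := by ring
    rw [h3, h2]
    nlinarith [ih]

/-- Measure bound for the bad set. -/
lemma badSet_measure (C : ℝ) (hC : 0 < C)
    (hsub : ∀ (m : ℕ) (c : ℕ → ℝ), c 0 = 1 → (∀ n, c n ∈ ({-1, 0, 1} : Set ℝ)) →
      ∀ ρ > 0,
        volume {lam : ℝ | lam ∈ Set.Icc (1/2 : ℝ) 0.668 ∧
            |∑ n ∈ Finset.range (m + 1), c n * lam ^ n| ≤ ρ}
          ≤ ENNReal.ofReal (C * ρ))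
    (α : ℕ → ℝ) (hα : ∀ N, 0 < α N) (N : ℕ) :
    volume (badSet α N) ≤ ENNReal.ofReal (2 * C * (3 ^ N * α N)) := by
  have hμ : ∀ k ∈ Finset.range N, ∀ v : Fin (N - 1 - k) → Fin 3,
      volume {lam : ℝ | lam ∈ Set.Icc (1/2 : ℝ) 0.668 ∧
        |∑ n ∈ Finset.range ((N - 1 - k) + 1), cOf (N - 1 - k) v n * lam ^ n|
          ≤ 2 ^ k * (2 * α N)} ≤ ENNReal.ofReal (C * (2 ^ k * (2 * α N))) := by
    intro k _ v
    exact hsub (N - 1 - k) (cOf (N - 1 - k) v) (cOf_zero _ _) (cOf_mem _ _)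
      (2 ^ k * (2 * α N)) (by
        have := hα N
        have := pow_pos (by norm_num : (0:ℝ) < 2) k
        nlinarith)
  calc volume (badSet α N)
      ≤ ∑ k ∈ Finset.range N, volume (⋃ v : Fin (N - 1 - k) → Fin 3,
          {lam : ℝ | lam ∈ Set.Icc (1/2 : ℝ) 0.668 ∧
            |∑ n ∈ Finset.range ((N - 1 - k) + 1), cOf (N - 1 - k) v n * lam ^ n|
              ≤ 2 ^ k * (2 * α N)}) := measure_biUnion_finset_le _ _
    _ ≤ ∑ k ∈ Finset.range N, ∑ v : Fin (N - 1 - k) → Fin 3,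
          volume {lam : ℝ | lam ∈ Set.Icc (1/2 : ℝ) 0.668 ∧
            |∑ n ∈ Finset.range ((N - 1 - k) + 1), cOf (N - 1 - k) v n * lam ^ n|
              ≤ 2 ^ k * (2 * α N)} := by
        refine Finset.sum_le_sum fun k _ => ?_
        exact measure_iUnion_fintype_le _ _
    _ ≤ ∑ k ∈ Finset.range N, ∑ _v : Fin (N - 1 - k) → Fin 3,
          ENNReal.ofReal (C * (2 ^ k * (2 * α N))) := by
        refine Finset.sum_le_sum fun k hk => Finset.sum_le_sum fun v _ => hμ k hk v
    _ = ∑ k ∈ Finset.range N,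
          ENNReal.ofReal ((3 : ℝ) ^ (N - 1 - k) * (C * (2 ^ k * (2 * α N)))) := by
        refine Finset.sum_congr rfl fun k _ => ?_
        rw [Finset.sum_const, Finset.card_univ, Fintype.card_fun, Fintype.card_fin,
          Fintype.card_fin, nsmul_eq_mul, ← ENNReal.ofReal_natCast,
          ← ENNReal.ofReal_mul (by positivity)]
        norm_num
    _ = ENNReal.ofReal (∑ k ∈ Finset.range N,
          (3 : ℝ) ^ (N - 1 - k) * (C * (2 ^ k * (2 * α N)))) := by
        rw [ENNReal.ofReal_sum_of_nonneg]
        intro k _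
        have h2 := pow_pos (by norm_num : (0:ℝ) < 2) k
        exact mul_nonneg (by positivity)
          (mul_nonneg hC.le (mul_nonneg h2.le (by linarith [hα N])))
    _ ≤ ENNReal.ofReal (2 * C * (3 ^ N * α N)) := by
        apply ENNReal.ofReal_le_ofReal
        have h1 : (∑ k ∈ Finset.range N, (3 : ℝ) ^ (N - 1 - k) * (C * (2 ^ k * (2 * α N))))
            = (2 * C * α N) * ∑ k ∈ Finset.range N, (3 : ℝ) ^ (N - 1 - k) * 2 ^ k := by
          rw [Finset.mul_sum]
          exact Finset.sum_congr rfl fun k _ => by ring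
        rw [h1]
        have h2 := geom_aux N
        have h3 : (0 : ℝ) < 2 * C * α N := mul_pos (mul_pos two_pos hC) (hα N)
        nlinarith [pow_pos (by norm_num : (0:ℝ) < 2) N]

lemma mem_Aprime_iff (lam : ℝ) (N : ℕ) (x : ℝ) :
    x ∈ Aprime lam N ↔ ∃ a : ℕ → Bool,
      x = ∑ n ∈ Finset.range N, if a n then lam ^ n else 0 := by
  constructor
  · rintro ⟨a, rfl⟩
    classical
    refine ⟨fun n => if h : n < N then a ⟨n, h⟩ else false, ?_⟩
    rw [← Fin.sum_univ_eq_sum_range (fun n => if (if h : n < N then a ⟨n, h⟩ else false)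
      then lam ^ n else 0) N]
    refine Finset.sum_congr rfl fun n _ => ?_
    simp [n.isLt]
  · rintro ⟨a, rfl⟩
    refine ⟨fun n => a n, ?_⟩
    rw [← Fin.sum_univ_eq_sum_range (fun n => if a n then lam ^ n else 0) N]

/-- If the min gap is small, the point is in the bad set. -/
lemma minGap_le_mem_badSet (α : ℕ → ℝ) (hα : ∀ N, 0 < α N) (N : ℕ) (hN : 1 ≤ N)
    (lam : ℝ) (hlam : lam ∈ Set.Icc (1/2 : ℝ) 0.668) (hmin : minGap lam N ≤ α N) :
    lam ∈ badSet α N := by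
  classical
  have hlam0 : (0 : ℝ) < lam := lt_of_lt_of_le (by norm_num) hlam.1
  -- the gap set is nonempty: 1 is in it
  set G := {d : ℝ | 0 < d ∧ ∃ x ∈ Aprime lam N, ∃ y ∈ Aprime lam N, d = |x - y|} with hG
  have h1 : (1 : ℝ) ∈ G := by
    refine ⟨one_pos, 1, ?_, 0, ?_, by simp⟩
    · rw [mem_Aprime_iff]
      refine ⟨fun n => n = 0, ?_⟩
      rw [Finset.sum_eq_single 0]
      · simp
      · intro b _ hb; simp [hb]
      · intro h; exact absurd (Finset.mem_range.2 hN) h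
    · rw [mem_Aprime_iff]
      exact ⟨fun _ => false, by simp⟩
  have hbdd : BddBelow G := ⟨0, fun d hd => le_of_lt hd.1⟩
  have hlt : sInf G < 2 * α N := lt_of_le_of_lt hmin (by linarith [hα N])
  obtain ⟨d, hdG, hd2⟩ := (csInf_lt_iff hbdd ⟨1, h1⟩).1 hlt
  obtain ⟨hd0, x, hx, y, hy, hdxy⟩ := hdG
  obtain ⟨a, rfl⟩ := (mem_Aprime_iff lam N x).1 hx
  obtain ⟨b, rfl⟩ := (mem_Aprime_iff lam N y).1 hy
  -- difference coefficients
  set c' : ℕ → ℝ := fun n => if n < N then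
    ((if a n then (1:ℝ) else 0) - (if b n then (1:ℝ) else 0)) else 0 with hc'
  have hdiff : (∑ n ∈ Finset.range N, if a n then lam ^ n else 0)
      - (∑ n ∈ Finset.range N, if b n then lam ^ n else 0)
      = ∑ n ∈ Finset.range N, c' n * lam ^ n := by
    rw [← Finset.sum_sub_distrib]
    refine Finset.sum_congr rfl fun n hn => ?_
    rw [Finset.mem_range] at hn
    by_cases ha : a n <;> by_cases hb : b n <;> simp [hc', ha, hb, hn]
  have hex : ∃ n, c' n ≠ 0 := by
    by_contra h
    push_neg at h
    have : (∑ n ∈ Finset.range N, c' n * lam ^ n) = 0 :=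
      Finset.sum_eq_zero fun n _ => by rw [h n, zero_mul]
    rw [this] at hdiff
    apply absurd hdxy
    rw [sub_eq_zero.1 hdiff]
    simp
    linarith
  set k := Nat.find hex with hk
  have hck : c' k ≠ 0 := Nat.find_spec hex
  have hkmin : ∀ j < k, c' j = 0 := fun j hj => by
    by_contra h; exact absurd hj (not_lt.2 (Nat.find_le h))
  have hkN : k < N := by
    by_contra h
    push_neg at h
    apply hck
    simp [hc', not_lt.2 h]
  set s := c' k with hs
  have hs1 : s = 1 ∨ s = -1 := by
    have : c' k = (if a k then (1:ℝ) else 0) - (if b k then (1:ℝ) else 0) := by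
      simp [hc', hkN]
    rcases Bool.eq_false_or_eq_true (a k) with h1 | h1 <;>
      rcases Bool.eq_false_or_eq_true (b k) with h2 | h2 <;>
      simp [h1, h2] at this <;> rw [hs, this] at hck ⊢ <;> simp at hck ⊢
  have hss : s * s = 1 := by rcases hs1 with h | h <;> rw [h] <;> ring
  have habs : |s| = 1 := by rcases hs1 with h | h <;> rw [h] <;> simp
  -- the normalized coefficients
  set c : ℕ → ℝ := fun n => s * c' (n + k) with hc
  have hc0 : c 0 = 1 := by simp only [hc, zero_add]; rw [← hs]; exact hss
  have hcmem : ∀ n, c n ∈ ({-1, 0, 1} : Set ℝ) := by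
    intro n
    by_cases h : n + k < N
    · have : c' (n + k) = (if a (n+k) then (1:ℝ) else 0) - (if b (n+k) then (1:ℝ) else 0) := by
        simp [hc', h]
      rcases Bool.eq_false_or_eq_true (a (n+k)) with h1 | h1 <;>
        rcases Bool.eq_false_or_eq_true (b (n+k)) with h2 | h2 <;>
        rcases hs1 with h3 | h3 <;>
        simp [hc, this, h1, h2, h3]
    · have : c' (n + k) = 0 := by simp [hc', h]
      simp [hc, this]
  -- sum identity
  have hsum1 : lam ^ k * (∑ n ∈ Finset.range (N - k), c n * lam ^ n)
      = s * ∑ n ∈ Finset.range N, c' n * lam ^ n := by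
    have e1 : ∑ n ∈ Finset.range N, c' n * lam ^ n
        = ∑ n ∈ Finset.Ico k N, c' n * lam ^ n := by
      rw [Finset.range_eq_Ico, ← Finset.sum_Ico_consecutive _ (Nat.zero_le k) hkN.le]
      have : ∑ n ∈ Finset.Ico 0 k, c' n * lam ^ n = 0 :=
        Finset.sum_eq_zero fun n hn => by
          rw [hkmin n (Finset.mem_Ico.1 hn).2, zero_mul]
      rw [this, zero_add]
    rw [e1, Finset.sum_Ico_eq_sum_range]
    rw [Finset.mul_sum, Finset.mul_sum]
    refine Finset.sum_congr rfl fun n hn => ?_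
    rw [hc]
    have : k + n = n + k := by omega
    rw [this, pow_add]
    ring
  have hsum2 : |∑ n ∈ Finset.range (N - k), c n * lam ^ n| * lam ^ k
      = |(∑ n ∈ Finset.range N, if a n then lam ^ n else 0)
          - (∑ n ∈ Finset.range N, if b n then lam ^ n else 0)| := by
    rw [hdiff, ← abs_of_pos (pow_pos hlam0 k), mul_comm, ← abs_mul, hsum1, abs_mul, habs,
      one_mul]
  -- bound
  have hbound : |∑ n ∈ Finset.range (N - k), c n * lam ^ n| ≤ 2 ^ k * (2 * α N) := by
    have hd' : |∑ n ∈ Finset.range (N - k), c n * lam ^ n| * lam ^ k ≤ 2 * α N := by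
      rw [hsum2, ← hdxy]; linarith
    have hpow : ((2 : ℝ)⁻¹) ^ k ≤ lam ^ k := by
      apply pow_le_pow_left₀ (by norm_num)
      calc (2 : ℝ)⁻¹ = 1/2 := by norm_num
        _ ≤ lam := hlam.1
    have habs0 : 0 ≤ |∑ n ∈ Finset.range (N - k), c n * lam ^ n| := abs_nonneg _
    have h2 : |∑ n ∈ Finset.range (N - k), c n * lam ^ n| * ((2:ℝ)⁻¹) ^ k ≤ 2 * α N :=
      le_trans (by gcongr) hd'
    have h3 := mul_le_mul_of_nonneg_right h2 (by positivity : (0:ℝ) ≤ 2 ^ k)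
    calc |∑ n ∈ Finset.range (N - k), c n * lam ^ n|
        = |∑ n ∈ Finset.range (N - k), c n * lam ^ n| * ((2:ℝ)⁻¹ ^ k * 2 ^ k) := by
          rw [← mul_pow]; norm_num
      _ = |∑ n ∈ Finset.range (N - k), c n * lam ^ n| * (2:ℝ)⁻¹ ^ k * 2 ^ k := by ring
      _ ≤ 2 * α N * 2 ^ k := h3
      _ = 2 ^ k * (2 * α N) := by ring
  -- encode into v
  set m := N - 1 - k with hm
  have hmk : N - k = m + 1 := by omega
  set v : Fin m → Fin 3 := fun i =>
    if c (i + 1) = -1 then 0 else if c (i + 1) = 0 then 1 else 2 with hv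
  have hcv : ∀ n ∈ Finset.range (m + 1), cOf m v n = c n := by
    intro n hn
    rw [Finset.mem_range] at hn
    rcases Nat.eq_zero_or_pos n with h0 | h0
    · rw [h0, cOf_zero, hc0]
    · have hn1 : n - 1 < m := by omega
      have hn2 : n - 1 + 1 = n := by omega
      have h0' : n ≠ 0 := by omega
      have : cOf m v n = fcoef (v ⟨n - 1, hn1⟩) := by
        simp [cOf, h0', hn1]
      rw [this, hv]
      have h := hcmem n
      simp only [Set.mem_insert_iff, Set.mem_singleton_iff] at h
      rcases h with h | h | h <;> simp [hn2, h, fcoef] <;> norm_num <;> rfl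
  -- conclude
  rw [badSet]
  simp only [Set.mem_iUnion]
  refine ⟨k, Finset.mem_range.2 hkN, v, hlam, ?_⟩
  have : ∑ n ∈ Finset.range (m + 1), cOf m v n * lam ^ n
      = ∑ n ∈ Finset.range (N - k), c n * lam ^ n := by
    rw [hmk]
    exact Finset.sum_congr rfl fun n hn => by rw [hcv n hn]
  rw [this]
  exact hbound

/-- Borel–Cantelli for minimal gaps. -/
theorem stmt_13 (C : ℝ) (hC : 0 < C)
    (hsub : ∀ (m : ℕ) (c : ℕ → ℝ), c 0 = 1 → (∀ n, c n ∈ ({-1, 0, 1} : Set ℝ)) →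
      ∀ ρ > 0,
        volume {lam : ℝ | lam ∈ Set.Icc (1/2 : ℝ) 0.668 ∧
            |∑ n ∈ Finset.range (m + 1), c n * lam ^ n| ≤ ρ}
          ≤ ENNReal.ofReal (C * ρ))
    (α : ℕ → ℝ) (hα : ∀ N, 0 < α N)
    (hsum : Summable (fun N : ℕ => (3 : ℝ) ^ N * α N)) :
    ∀ᵐ lam ∂(volume.restrict (Set.Icc (1/2 : ℝ) 0.668)),
      ∃ᶠ N in atTop, α N < minGap lam N := by
  have hsum2 : Summable (fun N : ℕ => 2 * C * (3 ^ N * α N)) := hsum.mul_left _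
  have htsum : (∑' N, volume (badSet α N)) ≠ ⊤ := by
    apply ne_top_of_le_ne_top (b := ∑' N, ENNReal.ofReal (2 * C * (3 ^ N * α N)))
    · rw [← ENNReal.ofReal_tsum_of_nonneg (fun N => mul_nonneg (mul_nonneg two_pos.le hC.le) (mul_nonneg (by positivity) (hα N).le)) hsum2]
      exact ENNReal.ofReal_ne_top
    · exact ENNReal.tsum_le_tsum fun N => badSet_measure C hC hsub α hα N
  have hae : ∀ᵐ lam : ℝ, {N | lam ∈ badSet α N}.Finite :=
    ae_finite_setOf_mem htsum
  have hae' : ∀ᵐ lam ∂(volume.restrict (Set.Icc (1/2 : ℝ) 0.668)),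
      {N | lam ∈ badSet α N}.Finite := ae_restrict_of_ae hae
  have hmem : ∀ᵐ lam ∂(volume.restrict (Set.Icc (1/2 : ℝ) 0.668)),
      lam ∈ Set.Icc (1/2 : ℝ) 0.668 := ae_restrict_mem measurableSet_Icc
  filter_upwards [hae', hmem] with lam hfin hlamI
  rw [frequently_atTop]
  intro M
  obtain ⟨M0, hM0⟩ := hfin.bddAbove
  refine ⟨max (max M 1) (M0 + 1), le_trans (le_max_left M 1) (le_max_left _ _), ?_⟩
  set N := max (max M 1) (M0 + 1) with hN
  by_contra h
  push_neg at h
  have hNin : lam ∈ badSet α N := by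
    apply minGap_le_mem_badSet α hα N _ lam hlamI h
    calc 1 ≤ max M 1 := le_max_right M 1
      _ ≤ N := le_max_left _ _
  have : N ≤ M0 := hM0 (show N ∈ {i | lam ∈ badSet α i} from hNin)
  omega
end

section
/- For λ ∈ (1/2, (√5−1)/2) and odd N, the two points x = Σ_{j=0}^{(N−3)/2} λ^{2j} and y = x + λ^{N−1} are consecutive elements of A'_N(λ), i.e., no element of A'_N(λ) lies strictly between x and y; in particular the largest gap λ^{N−1} is attained away from the endpoints. -/
private lemma sum_even_range (lam : ℝ) : ∀ m : ℕ,
    ∑ n ∈ Finset.range (2 * m), (if Even n then lam ^ n else 0)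
      = ∑ j ∈ Finset.range m, lam ^ (2 * j) := by
  intro m
  induction m with
  | zero => simp
  | succ m ih =>
    rw [show 2 * (m + 1) = (2 * m + 1) + 1 by ring, Finset.sum_range_succ,
      Finset.sum_range_succ, Finset.sum_range_succ]
    have h1 : ¬ Even (2 * m + 1) := by simp [Nat.even_add_one]
    simp [h1, ih]

private lemma lemP (lam : ℝ) (h0 : 0 ≤ lam) (h1 : lam + lam ^ 2 ≤ 1) :
    ∀ j i : ℕ, Even i →
      lam ^ (i + 2 * j) + ∑ n ∈ Finset.Ico i (i + 2 * j), (if Odd n then lam ^ n else 0)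
        ≤ lam ^ i := by
  intro j
  induction j with
  | zero => intro i _; simp
  | succ j ih =>
    intro i hi
    have hkey : i + 2 * (j + 1) = (i + 2) + 2 * j := by ring
    have hsplit : ∑ n ∈ Finset.Ico i (i + 2 * (j+1)), (if Odd n then lam ^ n else 0)
        = (if Odd i then lam ^ i else 0) + (if Odd (i+1) then lam ^ (i+1) else 0)
          + ∑ n ∈ Finset.Ico (i+2) ((i+2) + 2*j), (if Odd n then lam ^ n else 0) := by
      rw [hkey, ← Finset.sum_Ico_consecutive _ (by omega : i ≤ i + 2)
        (by omega : i + 2 ≤ i + 2 + 2*j)]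
      congr 1
      rw [Finset.sum_Ico_eq_sum_range]
      simp [Finset.sum_range_succ, show i + 2 - i = 2 by omega]
    have hOi : ¬ Odd i := by simpa [Nat.not_odd_iff_even] using hi
    have hOi1 : Odd (i+1) := Even.add_one hi
    have hIH := ih (i+2) (by exact hi.add (by norm_num))
    have e1 : lam ^ (i+1) = lam ^ i * lam := by ring
    have e2 : lam ^ (i+2) = lam ^ i * lam ^ 2 := by ring
    have hmul := mul_le_mul_of_nonneg_left h1 (pow_nonneg h0 i)
    rw [hsplit, hkey]
    simp only [hOi, hOi1, if_true, if_false]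
    nlinarith [hIH]

private lemma lemQ (lam : ℝ) (h0 : 0 ≤ lam) (h1 : lam + lam ^ 2 ≤ 1) :
    ∀ j i : ℕ, Odd i →
      lam ^ (i + 1 + 2 * j)
        ≤ lam ^ i - ∑ n ∈ Finset.Ico (i+1) (i + 1 + 2 * j), (if Even n then lam ^ n else 0) := by
  intro j
  induction j with
  | zero =>
    intro i _
    simp only [Nat.mul_zero, Nat.add_zero, Finset.Ico_self, Finset.sum_empty, sub_zero]
    have : lam ^ (i+1) = lam ^ i * lam := by ring
    nlinarith [pow_nonneg h0 i]
  | succ j ih =>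
    intro i hi
    have hkey : i + 1 + 2 * (j + 1) = (i + 2) + 1 + 2 * j := by ring
    have hsplit : ∑ n ∈ Finset.Ico (i+1) (i + 1 + 2 * (j+1)), (if Even n then lam ^ n else 0)
        = (if Even (i+1) then lam ^ (i+1) else 0) + (if Even (i+2) then lam ^ (i+2) else 0)
          + ∑ n ∈ Finset.Ico (i+3) ((i+2) + 1 + 2*j), (if Even n then lam ^ n else 0) := by
      rw [hkey, ← Finset.sum_Ico_consecutive _ (by omega : i + 1 ≤ i + 3)
        (by omega : i + 3 ≤ i + 2 + 1 + 2*j)]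
      congr 1
      rw [Finset.sum_Ico_eq_sum_range]
      simp [Finset.sum_range_succ, show i + 3 - (i+1) = 2 by omega, show i + 1 + 1 = i + 2 by omega]
    have hE1 : Even (i+1) := Odd.add_one hi
    have hE2 : ¬ Even (i+2) := by
      have : Odd (i + 2) := by exact hi.add_even (by norm_num)
      simpa [Nat.not_even_iff_odd] using this
    have hIH := ih (i+2) (hi.add_even (by norm_num))
    have e1 : lam ^ (i+1) = lam ^ i * lam := by ring
    have e2 : lam ^ (i+2) = lam ^ i * lam ^ 2 := by ring
    have hmul := mul_le_mul_of_nonneg_left h1 (pow_nonneg h0 i)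
    rw [hsplit, hkey]
    simp only [hE1, hE2, if_true, if_false]
    have h3 : (i+2) + 1 = i + 3 := by omega
    rw [h3] at hIH ⊢
    nlinarith [hIH]

private lemma x_repr (lam : ℝ) (M : ℕ) (hM : Even M) :
    ∑ n ∈ Finset.range (M + 1), (if Even n ∧ n < M then lam ^ n else 0)
      = ∑ j ∈ Finset.range (M / 2), lam ^ (2 * j) := by
  obtain ⟨m, hm⟩ := hM
  have h2 : M = 2 * m := by omega
  subst h2
  rw [Finset.sum_range_succ]
  have hc : ∀ n ∈ Finset.range (2 * m), (if Even n ∧ n < 2 * m then lam ^ n else 0)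
      = (if Even n then lam ^ n else 0) := by
    intro n hn
    have := Finset.mem_range.mp hn
    simp [this]
  rw [Finset.sum_congr rfl hc, sum_even_range]
  simp [Nat.mul_div_cancel_left m (by norm_num : 0 < 2)]

/-- For `λ ∈ (1/2, (√5-1)/2)` and odd `N ≥ 3`, the points
`x = 1 + λ² + ⋯ + λ^{N-3}` and `y = x + λ^{N-1}` are consecutive elements of `A'_N(λ)`;
in particular the largest gap `λ^{N-1}` is attained away from the endpoints. -/
theorem stmt_19 (lam : ℝ) (hlam : lam ∈ Set.Ioo (1/2 : ℝ) ((Real.sqrt 5 - 1) / 2))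
    (N : ℕ) (hN : 3 ≤ N) (hodd : Odd N) :
    (∑ j ∈ Finset.range ((N - 1) / 2), lam ^ (2 * j)) ∈ Aprime lam N ∧
    (∑ j ∈ Finset.range ((N - 1) / 2), lam ^ (2 * j)) + lam ^ (N - 1) ∈ Aprime lam N ∧
    ∀ z ∈ Aprime lam N,
      ¬((∑ j ∈ Finset.range ((N - 1) / 2), lam ^ (2 * j)) < z ∧
        z < (∑ j ∈ Finset.range ((N - 1) / 2), lam ^ (2 * j)) + lam ^ (N - 1)) := by
  obtain ⟨hlam1, hlam2⟩ := hlam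
  have h5 : Real.sqrt 5 ^ 2 = 5 := Real.sq_sqrt (by norm_num)
  have h5n : 0 ≤ Real.sqrt 5 := Real.sqrt_nonneg 5
  have h0 : 0 ≤ lam := by linarith
  have h1 : lam + lam ^ 2 ≤ 1 := by nlinarith
  obtain ⟨M, hMN⟩ : ∃ M, N = M + 1 := ⟨N - 1, by omega⟩
  subst hMN
  have hMeven : Even M := by rcases hodd with ⟨t, ht⟩; exact ⟨t, by omega⟩
  have hM2 : 2 ≤ M := by omega
  simp only [Nat.add_sub_cancel]
  have hx := x_repr lam M hMeven
  refine ⟨⟨fun n => decide (Even (n:ℕ) ∧ (n:ℕ) < M), ?_⟩,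
    ⟨fun n => decide (Even (n:ℕ)), ?_⟩, ?_⟩
  · simp only [decide_eq_true_eq]
    rw [Fin.sum_univ_eq_sum_range (fun n => if Even n ∧ n < M then lam ^ n else 0), ← hx]
  · simp only [decide_eq_true_eq]
    rw [Fin.sum_univ_eq_sum_range (fun n => if Even n then lam ^ n else 0)]
    rw [Finset.sum_range_succ, ← hx, Finset.sum_range_succ]
    have hc : ∀ n ∈ Finset.range M, (if Even n ∧ n < M then lam ^ n else 0)
        = (if Even n then lam ^ n else 0) := by
      intro n hn; have := Finset.mem_range.mp hn; simp [this]
    rw [Finset.sum_congr rfl hc]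
    simp [hMeven]
  · rintro z ⟨a, ha⟩ ⟨hzl, hzr⟩
    set b : ℕ → Bool := fun n => if h : n < M + 1 then a ⟨n, h⟩ else false with hb
    have hzb : z = ∑ n ∈ Finset.range (M+1), (if b n then lam ^ n else 0) := by
      rw [ha, ← Fin.sum_univ_eq_sum_range (fun n => if b n then lam ^ n else 0)]
      refine Finset.sum_congr rfl fun n _ => ?_
      have : b (n : ℕ) = a n := by simp [hb, n.isLt, Nat.le_of_lt_succ n.isLt]
      rw [this]
    set d : ℕ → ℝ := fun n =>
      (if b n then lam ^ n else 0) - (if Even n ∧ n < M then lam ^ n else 0) with hd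
    have hS : z - (∑ j ∈ Finset.range (M / 2), lam ^ (2 * j))
        = ∑ n ∈ Finset.range (M+1), d n := by
      rw [hzb, ← hx, ← Finset.sum_sub_distrib]
    have hSpos : 0 < ∑ n ∈ Finset.range (M+1), d n := by rw [← hS]; linarith
    have hSlt : ∑ n ∈ Finset.range (M+1), d n < lam ^ M := by rw [← hS]; linarith
    have hdzero : ∀ n, M + 1 ≤ n → d n = 0 := by
      intro n hn
      have h1' : ¬ n < M + 1 := by omega
      have h2' : ¬ n < M := by omega
      have h3' : ¬ n ≤ M := by omega
      simp [hd, hb, h1', h2', h3']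
    have hex : ∃ n, d n ≠ 0 := by
      by_contra h
      push_neg at h
      have : ∑ n ∈ Finset.range (M+1), d n = 0 := Finset.sum_eq_zero fun n _ => h n
      linarith
    set k := Nat.find hex with hkdef
    have hdk : d k ≠ 0 := Nat.find_spec hex
    have hmin : ∀ m, m < k → d m = 0 := fun m hm => not_not.mp (Nat.find_min hex hm)
    have hkN : k < M + 1 := by
      by_contra h
      exact hdk (hdzero k (by omega))
    have hsplit0 : ∑ n ∈ Finset.range (M+1), d n = ∑ n ∈ Finset.Ico k (M+1), d n := by
      rw [Finset.range_eq_Ico,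
        ← Finset.sum_Ico_consecutive _ (Nat.zero_le k) (le_of_lt hkN)]
      have hz0 : ∑ n ∈ Finset.Ico 0 k, d n = 0 :=
        Finset.sum_eq_zero fun n hn => hmin n (Finset.mem_Ico.mp hn).2
      rw [hz0, zero_add]
    have hsplit1 : ∑ n ∈ Finset.Ico k (M+1), d n
        = d k + ∑ n ∈ Finset.Ico (k+1) (M+1), d n :=
      Finset.sum_eq_sum_Ico_succ_bot hkN _
    have hpow : ∀ n : ℕ, (0:ℝ) ≤ lam ^ n := fun n => pow_nonneg h0 n
    by_cases hkM : k < M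
    · by_cases hke : Even k
      · -- Case A: even k < M, d k = -lam^k
        have hbk : b k = false := by
          by_contra hb'
          have : b k = true := by simpa using hb'
          exact hdk (by simp [hd, this, hke, hkM])
        have hdkv : d k = -lam ^ k := by simp [hd, hbk, hke, hkM]
        have hub : ∀ n ∈ Finset.Ico (k+1) (M+1),
            d n ≤ (if Even n ∧ n < M then 0 else lam ^ n) := by
          intro n _
          by_cases hc : Even n ∧ n < M
          · simp only [hd, hc, if_pos, if_true]
            by_cases hbn : b n <;> simp [hbn, hpow n]
          · simp only [hd, hc, if_false, if_neg hc, sub_zero]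
            by_cases hbn : b n <;> simp [hbn, hpow n]
        have htail : ∑ n ∈ Finset.Ico (k+1) (M+1), d n
            ≤ ∑ n ∈ Finset.Ico (k+1) (M+1), (if Even n ∧ n < M then 0 else lam ^ n) :=
          Finset.sum_le_sum hub
        have hub2 : ∑ n ∈ Finset.Ico (k+1) (M+1), (if Even n ∧ n < M then 0 else lam ^ n)
            = ∑ n ∈ Finset.Ico (k+1) M, (if Odd n then lam ^ n else 0) + lam ^ M := by
          rw [Finset.sum_Ico_succ_top (by omega : k + 1 ≤ M)]
          congr 1
          · refine Finset.sum_congr rfl fun n hn => ?_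
            have hnM : n < M := (Finset.mem_Ico.mp hn).2
            by_cases he : Even n
            · simp [he, hnM, Nat.not_odd_iff_even.mpr he]
            · simp [he, Nat.not_even_iff_odd.mp he]
          · simp [hMeven]
        obtain ⟨j, hj⟩ : ∃ j, M = k + 2 * j := by
          rcases hMeven with ⟨p, hp⟩; rcases hke with ⟨q, hq⟩
          exact ⟨p - q, by omega⟩
        have hP := lemP lam h0 h1 j k (by exact ⟨(k/2 : ℕ), by rcases hke with ⟨q,hq⟩; omega⟩)
        rw [← hj] at hP
        have hk0 : ∑ n ∈ Finset.Ico k M, (if Odd n then lam ^ n else 0)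
            = (if Odd k then lam ^ k else 0)
              + ∑ n ∈ Finset.Ico (k+1) M, (if Odd n then lam ^ n else 0) :=
          Finset.sum_eq_sum_Ico_succ_bot hkM _
        have hodk : ¬ Odd k := Nat.not_odd_iff_even.mpr hke
        rw [hk0] at hP
        simp only [hodk, if_false, zero_add] at hP
        have : ∑ n ∈ Finset.range (M+1), d n ≤ 0 := by
          rw [hsplit0, hsplit1, hdkv]
          linarith
        linarith
      · -- Case C: odd k < M, d k = lam^k
        have hok : Odd k := Nat.not_even_iff_odd.mp hke
        have hnc : ¬ (Even k ∧ k < M) := by tauto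
        have hbk : b k = true := by
          by_contra hb'
          have : b k = false := by simpa using hb'
          exact hdk (by simp [hd, this, hnc])
        have hdkv : d k = lam ^ k := by simp [hd, hbk, hnc]
        have hlb : ∀ n ∈ Finset.Ico (k+1) (M+1),
            (if Even n ∧ n < M then -lam ^ n else 0) ≤ d n := by
          intro n _
          by_cases hc : Even n ∧ n < M
          · simp only [hd, hc, if_pos, if_true]
            by_cases hbn : b n <;> simp [hbn, hpow n]
          · simp only [hd, if_neg hc, sub_zero]
            by_cases hbn : b n <;> simp [hbn, hpow n]
        have htail : ∑ n ∈ Finset.Ico (k+1) (M+1), (if Even n ∧ n < M then -lam ^ n else 0)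
            ≤ ∑ n ∈ Finset.Ico (k+1) (M+1), d n := Finset.sum_le_sum hlb
        have hlb2 : ∑ n ∈ Finset.Ico (k+1) (M+1), (if Even n ∧ n < M then -lam ^ n else 0)
            = -∑ n ∈ Finset.Ico (k+1) M, (if Even n then lam ^ n else 0) := by
          rw [Finset.sum_Ico_succ_top (by omega : k + 1 ≤ M)]
          have : ∀ n ∈ Finset.Ico (k+1) M, (if Even n ∧ n < M then -lam ^ n else 0)
              = -(if Even n then lam ^ n else 0) := by
            intro n hn
            have hnM : n < M := (Finset.mem_Ico.mp hn).2
            by_cases he : Even n <;> simp [he, hnM]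
          rw [Finset.sum_congr rfl this, Finset.sum_neg_distrib]
          simp
        obtain ⟨j, hj⟩ : ∃ j, M = k + 1 + 2 * j := by
          rcases hMeven with ⟨p, hp⟩; rcases hok with ⟨q, hq⟩
          exact ⟨p - q - 1, by omega⟩
        have hQ := lemQ lam h0 h1 j k hok
        rw [← hj] at hQ
        have : lam ^ M ≤ ∑ n ∈ Finset.range (M+1), d n := by
          rw [hsplit0, hsplit1, hdkv]
          rw [hlb2] at htail
          linarith
        linarith
    · -- Case B: k = M
      have hkM' : k = M := by omega
      have hnc : ¬ (Even k ∧ k < M) := by omega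
      have hbk : b k = true := by
        by_contra hb'
        have : b k = false := by simpa using hb'
        exact hdk (by simp [hd, this, hnc])
      have hdkv : d k = lam ^ k := by simp [hd, hbk, hnc]
      have hico : ∑ n ∈ Finset.Ico (k+1) (M+1), d n = 0 := by rw [hkM']; simp
      rw [hsplit0, hsplit1, hdkv, hico, add_zero, hkM'] at hSlt
      exact lt_irrefl _ hSlt
end
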